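/- arXiv:1404.1724 — 4 statements merged into one kernel-verified Lean document; each statement's English description precedes it below -/
import Mathlib

section
/- Hopf-type lemma at the origin: Let 0 < R < ∞. Suppose ū is a super-solution and u̲ a sub-solution of (⋆) on (0,R) such that ū(r) = r^{γ_+}·f(r) and u̲(r) = r^{γ_+}·g(r) for some functions f and g that are continuous on [0,R). If ū(r) ≥ u̲(r) for all r ∈ (0,R), then either f(0) > g(0) (that is, lim_{r→0} ū(r)/r^{γ_+} > lim_{r→0} u̲(r)/r^{γ_+}), or ū ≡ u̲ on (0,R). -/
open Set Filter Topology MeasureTheory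
open scoped ENNReal NNReal

/-- `γ₊ = ((1-p) + √((p-1)² + 4q))/2`, the positive root of `γ² + (p-1)γ - q = 0`. -/
noncomputable def gammaPlus (p q : ℝ) : ℝ :=
  ((1 - p) + Real.sqrt ((p - 1) ^ 2 + 4 * q)) / 2

/-- Condition (condF) on the nonlinearity `F` (with `0 < sp` recorded separately). -/
def CondF (F : ℝ → ℝ) (sp : ℝ) : Prop :=
  ContDiff ℝ 1 F ∧ F 0 = 0 ∧ F sp = 0 ∧
    (∀ t ∈ Set.Ioo 0 sp, F t < 0) ∧ (∀ t, sp < t → 0 < F t) ∧ 0 < deriv F sp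

/-- The ODE (⋆) `u'' + (p/r) u' - (q/r²) u = F(u)` holds at the point `r`. -/
def ODEAt (p q : ℝ) (F : ℝ → ℝ) (u : ℝ → ℝ) (r : ℝ) : Prop :=
  deriv (deriv u) r + (p / r) * deriv u r - (q / r ^ 2) * u r = F (u r)

/-- `ψ` is locally Lipschitz on the set `I`. -/
def LocLipOn (I : Set ℝ) (ψ : ℝ → ℝ) : Prop :=
  ∀ x ∈ I, ∃ K : ℝ≥0, ∃ t ∈ nhdsWithin x I, LipschitzOnWith K ψ t

/-- `ψ` is a locally Lipschitz, piecewise `C²` super-solution of (⋆) on `I`: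
outside a locally finite set `S` of jump points it is `C²` and satisfies
`ψ'' + (p/r)ψ' - (q/r²)ψ ≤ F(ψ)`, and at each jump point the one-sided
derivatives exist with `ψ'(r₀⁻) > ψ'(r₀⁺)`. -/
def IsSuperSolutionOn (p q : ℝ) (F : ℝ → ℝ) (I : Set ℝ) (ψ : ℝ → ℝ) : Prop :=
  LocLipOn I ψ ∧
    ∃ S : Set ℝ,
      (∀ x ∈ I, ∃ ε > 0, (S ∩ Set.Ioo (x - ε) (x + ε)).Finite) ∧
      (∀ x ∈ I \ S, ContDiffAt ℝ 2 ψ x ∧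
        deriv (deriv ψ) x + (p / x) * deriv ψ x - (q / x ^ 2) * ψ x ≤ F (ψ x)) ∧
      (∀ x ∈ I ∩ S, ∃ dl dr : ℝ, HasDerivWithinAt ψ dl (Set.Iio x) x ∧
        HasDerivWithinAt ψ dr (Set.Ioi x) x ∧ dr < dl)

/-- `ψ` is a locally Lipschitz, piecewise `C²` sub-solution of (⋆) on `I`. -/
def IsSubSolutionOn (p q : ℝ) (F : ℝ → ℝ) (I : Set ℝ) (ψ : ℝ → ℝ) : Prop :=
  LocLipOn I ψ ∧
    ∃ S : Set ℝ,
      (∀ x ∈ I, ∃ ε > 0, (S ∩ Set.Ioo (x - ε) (x + ε)).Finite) ∧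
      (∀ x ∈ I \ S, ContDiffAt ℝ 2 ψ x ∧
        F (ψ x) ≤ deriv (deriv ψ) x + (p / x) * deriv ψ x - (q / x ^ 2) * ψ x) ∧
      (∀ x ∈ I ∩ S, ∃ dl dr : ℝ, HasDerivWithinAt ψ dl (Set.Iio x) x ∧
        HasDerivWithinAt ψ dr (Set.Ioi x) x ∧ dl < dr)

section Helpers

lemma lmin_left {v : ℝ → ℝ} {m d : ℝ} (h : HasDerivWithinAt v d (Set.Iio m) m)
    (hm : IsLocalMin v m) : d ≤ 0 := by
  have hs : Tendsto (slope v m) (𝓝[Iio m \ {m}] m) (𝓝 d) :=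
    hasDerivWithinAt_iff_tendsto_slope.1 h
  rw [diff_singleton_eq_self (by simp)] at hs
  have hev : ∀ᶠ x in 𝓝[<] m, slope v m x ≤ 0 := by
    filter_upwards [hm.filter_mono nhdsWithin_le_nhds, self_mem_nhdsWithin] with x hx hx'
    have hxm : x - m < 0 := sub_neg.2 hx'
    have : 0 ≤ v x - v m := sub_nonneg.2 hx
    rw [slope_def_field]
    exact div_nonpos_of_nonneg_of_nonpos this hxm.le
  exact le_of_tendsto hs hev

lemma lmin_right {v : ℝ → ℝ} {m d : ℝ} (h : HasDerivWithinAt v d (Set.Ioi m) m)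
    (hm : IsLocalMin v m) : 0 ≤ d := by
  have hs : Tendsto (slope v m) (𝓝[Ioi m \ {m}] m) (𝓝 d) :=
    hasDerivWithinAt_iff_tendsto_slope.1 h
  rw [diff_singleton_eq_self (by simp)] at hs
  have hev : ∀ᶠ x in 𝓝[>] m, 0 ≤ slope v m x := by
    filter_upwards [hm.filter_mono nhdsWithin_le_nhds, self_mem_nhdsWithin] with x hx hx'
    have hxm : (0:ℝ) < x - m := sub_pos.2 hx'
    have h2 : 0 ≤ v x - v m := sub_nonneg.2 hx
    rw [slope_def_field]
    exact div_nonneg h2 hxm.le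
  exact ge_of_tendsto hs hev

lemma slope_right_le {u v : ℝ → ℝ} {m b du dv : ℝ} (hmb : m < b)
    (hu : HasDerivWithinAt u du (Set.Ioi m) m) (hv : HasDerivWithinAt v dv (Set.Ioi m) m)
    (heq : u m = v m) (hle : ∀ x ∈ Set.Ioo m b, u x ≤ v x) : du ≤ dv := by
  have hsu : Tendsto (slope u m) (𝓝[Ioi m \ {m}] m) (𝓝 du) :=
    hasDerivWithinAt_iff_tendsto_slope.1 hu
  have hsv : Tendsto (slope v m) (𝓝[Ioi m \ {m}] m) (𝓝 dv) :=
    hasDerivWithinAt_iff_tendsto_slope.1 hv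
  rw [diff_singleton_eq_self (by simp)] at hsu hsv
  have hmem : Set.Ioo m b ∈ 𝓝[>] m := Ioo_mem_nhdsGT_of_mem ⟨le_refl m, hmb⟩
  refine le_of_tendsto_of_tendsto hsu hsv ?_
  filter_upwards [hmem] with x hx
  have hxm : (0:ℝ) < x - m := sub_pos.2 hx.1
  rw [slope_def_field, slope_def_field, heq]
  gcongr
  exact hle x hx

lemma exists_open_smooth' {a : ℝ → ℝ} {m : ℝ} (h : ContDiffAt ℝ 2 a m) :
    ∃ t : Set ℝ, IsOpen t ∧ m ∈ t ∧ (∀ x ∈ t, DifferentiableAt ℝ a x) ∧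
      DifferentiableAt ℝ (deriv a) m := by
  obtain ⟨u, hu, hcd⟩ := h.contDiffOn le_rfl (by simp)
  obtain ⟨t, htu, hto, hmt⟩ := mem_nhds_iff.1 hu
  refine ⟨t, hto, hmt, fun x hx => ?_, ?_⟩
  · exact ((hcd.mono htu) x hx).differentiableWithinAt (by norm_num)
      |>.differentiableAt (hto.mem_nhds hx)
  · have h1 : ContDiffOn ℝ 1 (deriv a) t :=
      (hcd.mono htu).deriv_of_isOpen hto (by norm_num)
    exact ((h1 m hmt).contDiffAt (hto.mem_nhds hmt)).differentiableAt (by norm_num)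

lemma second_deriv_test {v : ℝ → ℝ} {m : ℝ} (hv : ContDiffAt ℝ 2 v m)
    (hm : IsLocalMin v m) : 0 ≤ deriv (deriv v) m := by
  by_contra hlt
  push_neg at hlt
  obtain ⟨u, hu, hcd⟩ := hv.contDiffOn le_rfl (by simp)
  obtain ⟨t, htu, hto, hmt⟩ := mem_nhds_iff.1 hu
  have hdiff : ∀ x ∈ t, DifferentiableAt ℝ v x := fun x hx =>
    ((hcd.mono htu) x hx).differentiableWithinAt (by norm_num)
      |>.differentiableAt (hto.mem_nhds hx)
  have hd1 : ContDiffAt ℝ 1 (deriv v) m := by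
    have : ContDiffOn ℝ 1 (deriv v) t := (hcd.mono htu).deriv_of_isOpen hto (by norm_num)
    exact (this m hmt).contDiffAt (hto.mem_nhds hmt)
  have hd0 : deriv v m = 0 := hm.deriv_eq_zero
  have hder : HasDerivAt (deriv v) (deriv (deriv v) m) m :=
    (hd1.differentiableAt (by norm_num)).hasDerivAt
  have hs : Tendsto (slope (deriv v) m) (𝓝[≠] m) (𝓝 (deriv (deriv v) m)) :=
    hasDerivAt_iff_tendsto_slope.1 hder
  have hev : ∀ᶠ x in 𝓝[>] m, deriv v x < 0 := by
    have : ∀ᶠ x in 𝓝[≠] m, slope (deriv v) m x < 0 :=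
      hs.eventually (eventually_lt_nhds hlt)
    have hsub : 𝓝[>] m ≤ 𝓝[≠] m := nhdsWithin_mono _ fun x hx => ne_of_gt hx
    filter_upwards [hsub this, self_mem_nhdsWithin] with x hx hx'
    have hxm : (0:ℝ) < x - m := sub_pos.2 hx'
    rw [slope_def_field, hd0, sub_zero] at hx
    rcases div_neg_iff.1 hx with ⟨_, h2⟩ | ⟨h1, _⟩
    · linarith
    · exact h1
  have H : ∀ᶠ x in 𝓝[>] m, deriv v x < 0 ∧ x ∈ t ∧ v m ≤ v x := by
    have h1 : ∀ᶠ x in 𝓝[>] m, x ∈ t :=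
      eventually_nhdsWithin_of_eventually_nhds (hto.eventually_mem hmt)
    have h2 : ∀ᶠ x in 𝓝[>] m, v m ≤ v x := eventually_nhdsWithin_of_eventually_nhds hm
    filter_upwards [hev, h1, h2] with x hx hx' hx''
    exact ⟨hx, hx', hx''⟩
  obtain ⟨b, hb, hball⟩ := mem_nhdsGT_iff_exists_Ioc_subset.1 H
  have hmb : m < b := hb
  have hIcc : ∀ x ∈ Icc m b, x = m ∨ x ∈ Ioc m b := by
    intro x hx
    rcases eq_or_lt_of_le hx.1 with h | h
    · exact Or.inl h.symm
    · exact Or.inr ⟨h, hx.2⟩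
  have hcont : ContinuousOn v (Icc m b) := by
    intro x hx
    rcases hIcc x hx with rfl | hx'
    · exact (hdiff x hmt).continuousAt.continuousWithinAt
    · exact (hdiff x (hball hx').2.1).continuousAt.continuousWithinAt
  have hanti : StrictAntiOn v (Icc m b) := by
    refine strictAntiOn_of_deriv_neg (convex_Icc m b) hcont ?_
    intro x hx
    rw [interior_Icc] at hx
    exact (hball ⟨hx.1, hx.2.le⟩).1
  have := hanti (left_mem_Icc.2 hmb.le) (right_mem_Icc.2 hmb.le) hmb
  have := (hball ⟨hmb, le_rfl⟩).2.2
  linarith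

lemma deriv2_comb {a b c : ℝ → ℝ} {ε m : ℝ} (ha : ContDiffAt ℝ 2 a m)
    (hb : ContDiffAt ℝ 2 b m) (hc : ContDiffAt ℝ 2 c m) :
    deriv (fun r => a r - b r - ε * c r) m = deriv a m - deriv b m - ε * deriv c m ∧
    deriv (deriv (fun r => a r - b r - ε * c r)) m
      = deriv (deriv a) m - deriv (deriv b) m - ε * deriv (deriv c) m := by
  obtain ⟨ta, hta, hmta, hda, hda2⟩ := exists_open_smooth' ha
  obtain ⟨tb, htb, hmtb, hdb, hdb2⟩ := exists_open_smooth' hb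
  obtain ⟨tc, htc, hmtc, hdc, hdc2⟩ := exists_open_smooth' hc
  have hkey : ∀ x ∈ ta ∩ tb ∩ tc,
      deriv (fun r => a r - b r - ε * c r) x = deriv a x - deriv b x - ε * deriv c x := by
    intro x hx
    rw [deriv_fun_sub (((hda x hx.1.1).fun_sub (hdb x hx.1.2))) ((hdc x hx.2).const_mul ε),
      deriv_fun_sub (hda x hx.1.1) (hdb x hx.1.2), deriv_const_mul ε (hdc x hx.2)]
  have hmem : ta ∩ tb ∩ tc ∈ 𝓝 m :=
    ((hta.inter htb).inter htc).mem_nhds ⟨⟨hmta, hmtb⟩, hmtc⟩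
  constructor
  · exact hkey m ⟨⟨hmta, hmtb⟩, hmtc⟩
  · have hev : deriv (fun r => a r - b r - ε * c r)
        =ᶠ[𝓝 m] fun x => deriv a x - deriv b x - ε * deriv c x := by
      filter_upwards [hmem] with x hx using hkey x hx
    rw [hev.deriv_eq, deriv_fun_sub (hda2.fun_sub hdb2) (hdc2.const_mul ε),
      deriv_fun_sub hda2 hdb2, deriv_const_mul ε hdc2]

lemma core_min {p q : ℝ} (hq : 0 < q) {F ub lb φ : ℝ → ℝ} {ε K m : ℝ}
    (hε : 0 < ε) (hK : 0 ≤ K) (hm : 0 < m)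
    (hmin : IsLocalMin (fun r => ub r - lb r - ε * φ r) m)
    (hneg : ub m - lb m - ε * φ m < 0)
    (hFK : F (ub m) - F (lb m) ≤ K * (ub m - lb m))
    (hφ : ContDiffAt ℝ 2 φ m)
    (hbar : K * φ m < deriv (deriv φ) m + (p/m) * deriv φ m - (q/m^2) * φ m)
    (hsmooth : (ContDiffAt ℝ 2 ub m ∧ ContDiffAt ℝ 2 lb m ∧
        (deriv (deriv ub) m + (p/m) * deriv ub m - (q/m^2) * ub m ≤ F (ub m)) ∧
        (F (lb m) ≤ deriv (deriv lb) m + (p/m) * deriv lb m - (q/m^2) * lb m))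
      ∨ (∃ dl dr : ℝ, HasDerivWithinAt (fun r => ub r - lb r) dl (Set.Iio m) m ∧
          HasDerivWithinAt (fun r => ub r - lb r) dr (Set.Ioi m) m ∧ dr < dl)) : False := by
  rcases hsmooth with ⟨hub, hlb, hAub, hAlb⟩ | ⟨dl, dr, h1, h2, hjump⟩
  · set v : ℝ → ℝ := fun r => ub r - lb r - ε * φ r with hv
    have hv2 : ContDiffAt ℝ 2 v m := (hub.sub hlb).sub (contDiffAt_const.mul hφ)
    have hd0 : deriv v m = 0 := hmin.deriv_eq_zero
    have hd2 : 0 ≤ deriv (deriv v) m := second_deriv_test hv2 hmin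
    obtain ⟨hc1, hc2⟩ := deriv2_comb hub hlb hφ
    rw [← hv] at hc1 hc2
    have hq2 : 0 < q / m^2 := div_pos hq (pow_pos hm 2)
    have hvm : v m < 0 := hneg
    have hKw : K * (ub m - lb m) ≤ K * (ε * φ m) :=
      mul_le_mul_of_nonneg_left (by linarith) hK
    have hεbar := mul_lt_mul_of_pos_left hbar hε
    have hpos : 0 < q / m^2 * (-(v m)) := mul_pos hq2 (by linarith)
    have hLv : deriv (deriv v) m + (p/m) * deriv v m - (q/m^2) * v m
        = (deriv (deriv ub) m + (p/m) * deriv ub m - (q/m^2) * ub m)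
          - (deriv (deriv lb) m + (p/m) * deriv lb m - (q/m^2) * lb m)
          - ε * (deriv (deriv φ) m + (p/m) * deriv φ m - (q/m^2) * φ m) := by
      rw [hc1, hc2]; simp only [hv]; ring
    rw [hd0] at hLv
    nlinarith [hLv, hAub, hAlb, hFK, hKw, hεbar, hpos, hd2]
  · have hdφ : HasDerivAt φ (deriv φ m) m :=
      (hφ.differentiableAt (by norm_num)).hasDerivAt
    have hL : HasDerivWithinAt (fun r => ub r - lb r - ε * φ r)
        (dl - ε * deriv φ m) (Set.Iio m) m :=
      h1.sub ((hdφ.hasDerivWithinAt).const_mul ε)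
    have hR : HasDerivWithinAt (fun r => ub r - lb r - ε * φ r)
        (dr - ε * deriv φ m) (Set.Ioi m) m :=
      h2.sub ((hdφ.hasDerivWithinAt).const_mul ε)
    have := lmin_left hL hmin
    have := lmin_right hR hmin
    linarith

lemma gamma_pos {p q : ℝ} (hq : 0 < q) : 0 < gammaPlus p q := by
  have h1 : (p-1)^2 < (p-1)^2 + 4*q := by linarith
  have h2 : |p - 1| < Real.sqrt ((p-1)^2 + 4*q) := by
    rw [← Real.sqrt_sq_eq_abs]
    exact Real.sqrt_lt_sqrt (sq_nonneg _) h1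
  have h3 : p - 1 ≤ |p - 1| := le_abs_self _
  unfold gammaPlus
  linarith

lemma gamma_eq {p q : ℝ} (hq : 0 < q) :
    gammaPlus p q ^ 2 + (p - 1) * gammaPlus p q = q := by
  have hD : (0:ℝ) ≤ (p-1)^2 + 4*q := by positivity
  have h1 : Real.sqrt ((p-1)^2 + 4*q) ^ 2 = (p-1)^2 + 4*q := Real.sq_sqrt hD
  unfold gammaPlus
  nlinarith [h1]

lemma phi0_props {γ m : ℝ} (hm : 0 < m) :
    ContDiffAt ℝ 2 (fun r : ℝ => r ^ γ + r ^ (γ+1)) m ∧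
    deriv (fun r : ℝ => r ^ γ + r ^ (γ+1)) m = γ * m^(γ-1) + (γ+1) * m^γ ∧
    deriv (deriv (fun r : ℝ => r ^ γ + r ^ (γ+1))) m
      = γ * (γ-1) * m^(γ-2) + (γ+1) * γ * m^(γ-1) := by
  have hD : ∀ x : ℝ, 0 < x → HasDerivAt (fun r : ℝ => r ^ γ + r ^ (γ+1))
      (γ * x^(γ-1) + (γ+1) * x^(γ+1-1)) x := fun x hx =>
    (Real.hasDerivAt_rpow_const (Or.inl hx.ne')).add
      (Real.hasDerivAt_rpow_const (Or.inl hx.ne'))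
  refine ⟨(Real.contDiffAt_rpow_const_of_ne hm.ne').add
      (Real.contDiffAt_rpow_const_of_ne hm.ne'), ?_, ?_⟩
  · rw [(hD m hm).deriv]
    rw [show γ + 1 - 1 = γ by ring]
  · have hev : deriv (fun r : ℝ => r ^ γ + r ^ (γ+1))
        =ᶠ[𝓝 m] fun x => γ * x^(γ-1) + (γ+1) * x^(γ+1-1) := by
      filter_upwards [isOpen_Ioi.mem_nhds (mem_Ioi.2 hm)] with x hx
      exact (hD x hx).deriv
    rw [hev.deriv_eq]
    have h2 : HasDerivAt (fun x : ℝ => γ * x^(γ-1) + (γ+1) * x^(γ+1-1))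
        (γ * ((γ-1) * m^(γ-1-1)) + (γ+1) * ((γ+1-1) * m^(γ+1-1-1))) m :=
      ((Real.hasDerivAt_rpow_const (Or.inl hm.ne')).const_mul γ).add
        ((Real.hasDerivAt_rpow_const (Or.inl hm.ne')).const_mul (γ+1))
    rw [h2.deriv, show γ - 1 - 1 = γ - 2 by ring, show γ + 1 - 1 - 1 = γ - 1 by ring,
      show γ + 1 - 1 = γ by ring]
    ring

lemma hexp_props {α r₀ m : ℝ} :
    ContDiffAt ℝ 2 (fun r : ℝ => Real.exp (α*(r - r₀)) - 1) m ∧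
    deriv (fun r : ℝ => Real.exp (α*(r - r₀)) - 1) m = α * Real.exp (α*(m - r₀)) ∧
    deriv (deriv (fun r : ℝ => Real.exp (α*(r - r₀)) - 1)) m
      = α^2 * Real.exp (α*(m - r₀)) := by
  have hD : ∀ x : ℝ, HasDerivAt (fun r : ℝ => Real.exp (α*(r - r₀)) - 1)
      (α * Real.exp (α*(x - r₀))) x := by
    intro x
    have h1 : HasDerivAt (fun r : ℝ => α*(r - r₀)) α x := by
      simpa using ((hasDerivAt_id x).sub_const r₀).const_mul α
    simpa [mul_comm] using (h1.exp.sub_const 1)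
  have hcd : ContDiff ℝ 2 (fun r : ℝ => Real.exp (α*(r - r₀)) - 1) := by
    apply ContDiff.sub _ contDiff_const
    exact Real.contDiff_exp.comp (contDiff_const.mul (contDiff_id.sub contDiff_const))
  have hdf : deriv (fun r : ℝ => Real.exp (α*(r - r₀)) - 1)
      = fun x => α * Real.exp (α*(x - r₀)) := funext fun x => (hD x).deriv
  refine ⟨hcd.contDiffAt, (hD m).deriv, ?_⟩
  rw [hdf]
  have h2 : HasDerivAt (fun x : ℝ => α * Real.exp (α*(x - r₀)))
      (α * (α * Real.exp (α*(m - r₀)))) m := by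
    have h1 : HasDerivAt (fun r : ℝ => α*(r - r₀)) α m := by
      simpa using ((hasDerivAt_id m).sub_const r₀).const_mul α
    simpa [mul_comm, mul_assoc] using (h1.exp.const_mul α)
  rw [h2.deriv]; ring

end Helpers

set_option maxHeartbeats 1000000 in
/-- Hopf-type lemma at the origin. -/
theorem stmt7 (p q sp : ℝ) (hp : 0 ≤ p) (hq : 0 < q) (hsp : 0 < sp)
    (F : ℝ → ℝ) (hF : CondF F sp)
    (R : ℝ) (hR : 0 < R)
    (ub lb f g : ℝ → ℝ)
    (hsuper : IsSuperSolutionOn p q F (Set.Ioo 0 R) ub)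
    (hsub : IsSubSolutionOn p q F (Set.Ioo 0 R) lb)
    (hf : ContinuousOn f (Set.Ico 0 R)) (hg : ContinuousOn g (Set.Ico 0 R))
    (hubf : ∀ r ∈ Set.Ico (0:ℝ) R, ub r = r ^ gammaPlus p q * f r)
    (hlbg : ∀ r ∈ Set.Ico (0:ℝ) R, lb r = r ^ gammaPlus p q * g r)
    (hge : ∀ r ∈ Set.Ioo (0:ℝ) R, lb r ≤ ub r) :
    g 0 < f 0 ∨ ∀ r ∈ Set.Ioo (0:ℝ) R, ub r = lb r := by
  classical
  obtain ⟨hF1, -, -, -, -, -⟩ := hF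
  have hγ : 0 < gammaPlus p q := gamma_pos hq
  have hγq : gammaPlus p q ^ 2 + (p - 1) * gammaPlus p q = q := gamma_eq hq
  set γ := gammaPlus p q with hγdef
  obtain ⟨hlipU, SU, hSUloc, hsmU, hjmpU⟩ := hsuper
  obtain ⟨hlipL, SL, hSLloc, hsmL, hjmpL⟩ := hsub
  -- continuity of ub, lb on (0,R)
  have hContU : ContinuousOn ub (Set.Ioo 0 R) := by
    intro x hx
    obtain ⟨K, t, ht, hlip⟩ := hlipU x hx
    obtain ⟨U, hUo, hxU, hUsub⟩ := mem_nhdsWithin.1 ht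
    exact (hlip.continuousOn x (hUsub ⟨hxU, hx⟩)).mono_of_mem_nhdsWithin ht
  have hContL : ContinuousOn lb (Set.Ioo 0 R) := by
    intro x hx
    obtain ⟨K, t, ht, hlip⟩ := hlipL x hx
    obtain ⟨U, hUo, hxU, hUsub⟩ := mem_nhdsWithin.1 ht
    exact (hlip.continuousOn x (hUsub ⟨hxU, hx⟩)).mono_of_mem_nhdsWithin ht
  have hw0 : ∀ r ∈ Set.Ioo (0:ℝ) R, 0 ≤ ub r - lb r := fun r hr => sub_nonneg.2 (hge r hr)
  have hI : Set.Ioo (0:ℝ) R ⊆ Set.Ico 0 R := fun x hx => ⟨hx.1.le, hx.2⟩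
  have hfg : ∀ r ∈ Set.Ioo (0:ℝ) R, g r ≤ f r := by
    intro r hr
    have h1 := hge r hr
    rw [hubf r (hI hr), hlbg r (hI hr)] at h1
    have h2 : (0:ℝ) < r ^ γ := Real.rpow_pos_of_pos hr.1 γ
    exact (mul_le_mul_iff_right₀ h2).1 h1
  by_cases hcase : g 0 < f 0
  · exact Or.inl hcase
  right
  have hNB0 : (𝓝[Set.Ioo (0:ℝ) R] (0:ℝ)).NeBot := by
    rw [nhdsWithin_Ioo_eq_nhdsGT hR]; infer_instance
  have hmono0 : 𝓝[Set.Ioo (0:ℝ) R] (0:ℝ) ≤ 𝓝[Set.Ico (0:ℝ) R] (0:ℝ) := nhdsWithin_mono _ hI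
  have hg0 : g 0 ≤ f 0 := by
    have hfc : Tendsto f (𝓝[Set.Ioo (0:ℝ) R] 0) (𝓝 (f 0)) :=
      ((hf 0 ⟨le_rfl, hR⟩) : ContinuousWithinAt f (Set.Ico 0 R) 0).mono_left hmono0
    have hgc : Tendsto g (𝓝[Set.Ioo (0:ℝ) R] 0) (𝓝 (g 0)) :=
      ((hg 0 ⟨le_rfl, hR⟩) : ContinuousWithinAt g (Set.Ico 0 R) 0).mono_left hmono0
    exact le_of_tendsto_of_tendsto hgc hfc (eventually_nhdsWithin_of_forall hfg)
  have hfg0 : f 0 = g 0 := le_antisymm (not_lt.1 hcase) hg0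
  by_contra hne
  push_neg at hne
  obtain ⟨r₁, hr₁, hne₁⟩ := hne
  have hr₁0 : 0 < r₁ := hr₁.1
  have hr₁R : r₁ < R := hr₁.2
  have hwr₁ : 0 < ub r₁ - lb r₁ :=
    lt_of_le_of_ne (hw0 r₁ hr₁) (Ne.symm (sub_ne_zero.2 hne₁))
  -- Lipschitz constant K for F on the range of ub, lb over (0, r₁]
  have hIccIco : Set.Icc (0:ℝ) r₁ ⊆ Set.Ico 0 R := fun x hx => ⟨hx.1, lt_of_le_of_lt hx.2 hr₁R⟩
  have hrpowc : ContinuousOn (fun r : ℝ => r ^ γ) (Set.Icc 0 r₁) := fun x _ =>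
    (Real.continuousAt_rpow_const x γ (Or.inr hγ.le)).continuousWithinAt
  obtain ⟨Cu, hCu⟩ := isCompact_Icc.exists_bound_of_continuousOn (hrpowc.mul (hf.mono hIccIco))
  obtain ⟨Cl, hCl⟩ := isCompact_Icc.exists_bound_of_continuousOn (hrpowc.mul (hg.mono hIccIco))
  set C := max Cu Cl with hCdef
  have hubC : ∀ r ∈ Set.Ioc (0:ℝ) r₁, ub r ∈ Set.Icc (-C) C := by
    intro r hr
    have hr' : r ∈ Set.Icc (0:ℝ) r₁ := ⟨hr.1.le, hr.2⟩
    have := hCu r hr'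
    rw [Real.norm_eq_abs] at this
    have h2 : |ub r| ≤ C := by
      rw [hubf r (hIccIco hr')]
      exact le_trans this (le_max_left _ _)
    exact ⟨neg_le_of_abs_le h2, le_of_abs_le h2⟩
  have hlbC : ∀ r ∈ Set.Ioc (0:ℝ) r₁, lb r ∈ Set.Icc (-C) C := by
    intro r hr
    have hr' : r ∈ Set.Icc (0:ℝ) r₁ := ⟨hr.1.le, hr.2⟩
    have := hCl r hr'
    rw [Real.norm_eq_abs] at this
    have h2 : |lb r| ≤ C := by
      rw [hlbg r (hIccIco hr')]
      exact le_trans this (le_max_right _ _)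
    exact ⟨neg_le_of_abs_le h2, le_of_abs_le h2⟩
  obtain ⟨K₀, hK₀⟩ := (isCompact_Icc (a := -C) (b := C)).exists_bound_of_continuousOn
    ((hF1.continuous_deriv le_rfl).continuousOn)
  set K := max K₀ 0 with hKdef
  have hKnn : (0:ℝ) ≤ K := le_max_right _ _
  have hFK : ∀ r ∈ Set.Ioc (0:ℝ) r₁, F (ub r) - F (lb r) ≤ K * (ub r - lb r) := by
    intro r hr
    have hu := hubC r hr
    have hl := hlbC r hr
    have hmv := Convex.norm_image_sub_le_of_norm_deriv_le
      (f := F) (s := Set.Icc (-C) C) (C := K)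
      (fun x _ => hF1.differentiable one_ne_zero |>.differentiableAt)
      (fun x hx => le_trans (hK₀ x hx) (le_max_left _ _)) (convex_Icc _ _) hl hu
    rw [Real.norm_eq_abs, Real.norm_eq_abs] at hmv
    have hw : 0 ≤ ub r - lb r := hw0 r ⟨hr.1, lt_of_le_of_lt hr.2 hr₁R⟩
    calc F (ub r) - F (lb r) ≤ |F (ub r) - F (lb r)| := le_abs_self _
    _ ≤ K * |ub r - lb r| := hmv
    _ = K * (ub r - lb r) := by rw [abs_of_nonneg hw]
  -- one-sided / smooth dichotomy at every point
  have hside : ∀ m ∈ Set.Ioo (0:ℝ) R,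
      (ContDiffAt ℝ 2 ub m ∧ ContDiffAt ℝ 2 lb m ∧
        (deriv (deriv ub) m + (p/m) * deriv ub m - (q/m^2) * ub m ≤ F (ub m)) ∧
        (F (lb m) ≤ deriv (deriv lb) m + (p/m) * deriv lb m - (q/m^2) * lb m))
      ∨ (∃ dl dr : ℝ, HasDerivWithinAt (fun r => ub r - lb r) dl (Set.Iio m) m ∧
          HasDerivWithinAt (fun r => ub r - lb r) dr (Set.Ioi m) m ∧ dr < dl) := by
    intro m hm
    by_cases hU : m ∈ SU
    · right
      obtain ⟨dlu, dru, h1, h2, h3⟩ := hjmpU m ⟨hm, hU⟩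
      by_cases hL : m ∈ SL
      · obtain ⟨dll, drl, h4, h5, h6⟩ := hjmpL m ⟨hm, hL⟩
        exact ⟨dlu - dll, dru - drl, h1.sub h4, h2.sub h5, by linarith⟩
      · have hd := (((hsmL m ⟨hm, hL⟩).1.differentiableAt (by norm_num)).hasDerivAt
          : HasDerivAt lb (deriv lb m) m)
        exact ⟨dlu - deriv lb m, dru - deriv lb m, h1.sub hd.hasDerivWithinAt,
          h2.sub hd.hasDerivWithinAt, by linarith⟩
    · by_cases hL : m ∈ SL
      · right
        obtain ⟨dll, drl, h4, h5, h6⟩ := hjmpL m ⟨hm, hL⟩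
        have hd := (((hsmU m ⟨hm, hU⟩).1.differentiableAt (by norm_num)).hasDerivAt
          : HasDerivAt ub (deriv ub m) m)
        exact ⟨deriv ub m - dll, deriv ub m - drl, hd.hasDerivWithinAt.sub h4,
          hd.hasDerivWithinAt.sub h5, by linarith⟩
      · left
        exact ⟨(hsmU m ⟨hm, hU⟩).1, (hsmL m ⟨hm, hL⟩).1,
          (hsmU m ⟨hm, hU⟩).2, (hsmL m ⟨hm, hL⟩).2⟩
  -- the small radius b₀ for the origin barrier
  set b₀ := min (min 1 r₁) (γ/(2*K+1)) with hb₀def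
  have hb₀pos : 0 < b₀ :=
    lt_min (lt_min one_pos hr₁0) (div_pos hγ (by linarith))
  have hb₀1 : b₀ ≤ 1 := le_trans (min_le_left _ _) (min_le_left _ _)
  have hb₀r₁ : b₀ ≤ r₁ := le_trans (min_le_left _ _) (min_le_right _ _)
  have hb₀γ : b₀ ≤ γ/(2*K+1) := min_le_right _ _
  -- properties of the origin barrier φ(r) = r^γ + r^(γ+1)
  have hφpos : ∀ m : ℝ, 0 < m → 0 < m ^ γ + m ^ (γ+1) := fun m hm =>
    add_pos (Real.rpow_pos_of_pos hm γ) (Real.rpow_pos_of_pos hm (γ+1))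
  have hbar0 : ∀ m ∈ Set.Ioc (0:ℝ) b₀,
      K * (m ^ γ + m ^ (γ+1)) <
        deriv (deriv (fun r : ℝ => r ^ γ + r ^ (γ+1))) m
          + (p/m) * deriv (fun r : ℝ => r ^ γ + r ^ (γ+1)) m
          - (q/m^2) * (m ^ γ + m ^ (γ+1)) := by
    intro m hm
    have hm0 : 0 < m := hm.1
    obtain ⟨hcd, hd1, hd2⟩ := phi0_props (γ := γ) hm0
    rw [hd1, hd2]
    have hX : 0 < m ^ γ := Real.rpow_pos_of_pos hm0 γ
    have e1 : m ^ (γ-1) = m ^ γ / m := by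
      rw [Real.rpow_sub hm0, Real.rpow_one]
    have e2 : m ^ (γ-2) = m ^ γ / m^2 := by
      rw [Real.rpow_sub hm0, show ((2:ℝ)) = ((2:ℕ):ℝ) by norm_num, Real.rpow_natCast]
    have e3 : m ^ (γ+1) = m ^ γ * m := by
      rw [Real.rpow_add hm0, Real.rpow_one]
    rw [e1, e2, e3]
    have hRHS : γ * (γ-1) * (m ^ γ / m^2) + (γ+1) * γ * (m ^ γ / m)
        + (p/m) * (γ * (m ^ γ / m) + (γ+1) * m ^ γ)
        - (q/m^2) * (m ^ γ + m ^ γ * m) = (2*γ + p) * (m ^ γ / m) := by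
      rw [← hγq]
      field_simp
      ring
    rw [hRHS]
    have hm1 : m ≤ 1 := le_trans hm.2 hb₀1
    have hmγ : m * (2*K+1) ≤ γ := by
      have := le_trans hm.2 hb₀γ
      rw [le_div_iff₀ (by linarith : (0:ℝ) < 2*K+1)] at this
      exact this
    have h1 : K * m * (1 + m) < 2*γ + p := by nlinarith
    calc K * (m ^ γ + m ^ γ * m) = (K * m * (1 + m)) * (m ^ γ / m) := by
          field_simp
    _ < (2*γ + p) * (m ^ γ / m) := by
          exact mul_lt_mul_of_pos_right h1 (div_pos hX hm0)
  by_cases hA : ∃ b, b ∈ Set.Ioo (0:ℝ) b₀ ∧ 0 < ub b - lb b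
  -- CASE A: `ub - lb` is positive at points arbitrarily close to the origin
  · obtain ⟨b, hb, hwb⟩ := hA
    have hbr₁ : b < r₁ := lt_of_lt_of_le hb.2 hb₀r₁
    have hbR : b < R := lt_trans hbr₁ hr₁R
    have hbI : b ∈ Set.Ioo (0:ℝ) R := ⟨hb.1, hbR⟩
    have hφb : 0 < b ^ γ + b ^ (γ+1) := hφpos b hb.1
    set ε := (ub b - lb b) / (b ^ γ + b ^ (γ+1)) with hεdef
    have hε : 0 < ε := div_pos hwb hφb
    obtain ⟨v, hvdef⟩ : ∃ v : ℝ → ℝ, v = fun r => ub r - lb r - ε * (r ^ γ + r ^ (γ+1)) :=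
      ⟨_, rfl⟩
    have hvb : v b = 0 := by
      rw [hvdef]
      show ub b - lb b - ε * (b ^ γ + b ^ (γ+1)) = 0
      rw [hεdef, div_mul_cancel₀ _ (ne_of_gt hφb)]; ring
    have hφcont : ContinuousOn (fun r : ℝ => r ^ γ + r ^ (γ+1)) (Set.Ioo 0 R) := fun x _ =>
      ((Real.continuousAt_rpow_const x γ (Or.inr hγ.le)).add
        (Real.continuousAt_rpow_const x (γ+1) (Or.inr (by linarith)))).continuousWithinAt
    have hvcont : ContinuousOn v (Set.Ioo 0 R) := by
      rw [hvdef]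
      exact (hContU.sub hContL).sub (continuousOn_const.mul hφcont)
    -- v r = r^γ * (f r - g r - ε(1+r)) on (0, b)
    have hveq : ∀ r ∈ Set.Ioo (0:ℝ) b, v r = r ^ γ * (f r - g r - ε*(1+r)) := by
      intro r hr
      have hrI : r ∈ Set.Ico (0:ℝ) R := ⟨hr.1.le, lt_trans hr.2 hbR⟩
      rw [hvdef]
      show ub r - lb r - ε * (r ^ γ + r ^ (γ+1)) = _
      rw [hubf r hrI, hlbg r hrI, Real.rpow_add hr.1, Real.rpow_one]
      ring
    have hfilter : 𝓝[Set.Ioo (0:ℝ) b] (0:ℝ) = 𝓝[>] (0:ℝ) :=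
      nhdsWithin_Ioo_eq_nhdsGT hb.1
    haveI hNB : (𝓝[Set.Ioo (0:ℝ) b] (0:ℝ)).NeBot := by rw [hfilter]; infer_instance
    have hmono : 𝓝[Set.Ioo (0:ℝ) b] (0:ℝ) ≤ 𝓝[Set.Ico (0:ℝ) R] (0:ℝ) :=
      nhdsWithin_mono _ (fun x hx => ⟨hx.1.le, lt_trans hx.2 hbR⟩)
    have hfgten : Tendsto (fun r => f r - g r) (𝓝[Set.Ioo (0:ℝ) b] 0) (𝓝 0) := by
      have h1 : Tendsto f (𝓝[Set.Ioo (0:ℝ) b] 0) (𝓝 (f 0)) :=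
        ((hf 0 ⟨le_rfl, hR⟩) : ContinuousWithinAt f (Set.Ico 0 R) 0).mono_left hmono
      have h2 : Tendsto g (𝓝[Set.Ioo (0:ℝ) b] 0) (𝓝 (g 0)) :=
        ((hg 0 ⟨le_rfl, hR⟩) : ContinuousWithinAt g (Set.Ico 0 R) 0).mono_left hmono
      have := h1.sub h2
      rwa [hfg0, sub_self] at this
    -- v < 0 somewhere in (0, b)
    have hev_neg : ∀ᶠ r in 𝓝[Set.Ioo (0:ℝ) b] 0, v r < 0 := by
      have h1 : ∀ᶠ r in 𝓝[Set.Ioo (0:ℝ) b] 0, f r - g r < ε :=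
        hfgten.eventually_lt_const hε
      filter_upwards [h1, self_mem_nhdsWithin] with r h1r hrmem
      rw [hveq r hrmem]
      have h3 : f r - g r - ε*(1+r) < 0 := by nlinarith [hrmem.1, hε]
      exact mul_neg_of_pos_of_neg (Real.rpow_pos_of_pos hrmem.1 γ) h3
    obtain ⟨x₀, hx₀neg, hx₀mem⟩ := (hev_neg.and self_mem_nhdsWithin).exists
    -- v tends to 0 at the origin
    have hv0 : Tendsto v (𝓝[Set.Ioo (0:ℝ) b] 0) (𝓝 0) := by
      have hrpow0 : Tendsto (fun r : ℝ => r ^ γ) (𝓝[Set.Ioo (0:ℝ) b] 0) (𝓝 0) := by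
        have hc := (Real.continuousAt_rpow_const 0 γ (Or.inr hγ.le)).tendsto
        rw [Real.zero_rpow hγ.ne'] at hc
        exact hc.mono_left nhdsWithin_le_nhds
      have hfac : Tendsto (fun r => f r - g r - ε*(1+r)) (𝓝[Set.Ioo (0:ℝ) b] 0) (𝓝 (-ε)) := by
        have h2 : Tendsto (fun r : ℝ => ε*(1+r)) (𝓝[Set.Ioo (0:ℝ) b] 0) (𝓝 (ε*(1+0))) :=
          ((continuous_const.mul (continuous_const.add continuous_id)).tendsto 0).mono_left
            nhdsWithin_le_nhds
        have := hfgten.sub h2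
        simpa using this
      have hprod := hrpow0.mul hfac
      rw [zero_mul] at hprod
      refine hprod.congr' ?_
      filter_upwards [self_mem_nhdsWithin] with r hr
      exact (hveq r hr).symm
    -- a point t close to 0 with v t > v x₀ / 2
    have hev_t : ∀ᶠ r in 𝓝[Set.Ioo (0:ℝ) b] 0, v x₀ / 2 < v r :=
      hv0.eventually_const_lt (by linarith)
    have hIoox₀ : ∀ᶠ r in 𝓝[Set.Ioo (0:ℝ) b] 0, r ∈ Set.Ioo (0:ℝ) x₀ := by
      rw [hfilter]
      exact eventually_mem_set.2 (Ioo_mem_nhdsGT hx₀mem.1)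
    obtain ⟨t, hvt, ht⟩ := (hev_t.and hIoox₀).exists
    -- minimise v on [t, b]
    have htb : t ≤ b := le_of_lt (lt_trans ht.2 hx₀mem.2)
    have hIccI : Set.Icc t b ⊆ Set.Ioo 0 R := fun x hx =>
      ⟨lt_of_lt_of_le ht.1 hx.1, lt_of_le_of_lt hx.2 hbR⟩
    obtain ⟨m, hmIcc, hmin⟩ := isCompact_Icc.exists_isMinOn (Set.nonempty_Icc.2 htb)
      (hvcont.mono hIccI)
    have hvm_le : v m ≤ v x₀ := hmin ⟨ht.2.le, hx₀mem.2.le⟩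
    have hvmneg : v m < 0 := lt_of_le_of_lt hvm_le hx₀neg
    have htm : t < m := lt_of_le_of_ne hmIcc.1 (by rintro rfl; linarith)
    have hmb : m < b := lt_of_le_of_ne hmIcc.2 (by rintro rfl; rw [hvb] at hvmneg; linarith)
    have hlocal : IsLocalMin v m := hmin.isLocalMin (Icc_mem_nhds htm hmb)
    have hm0 : 0 < m := lt_trans ht.1 htm
    have hmI : m ∈ Set.Ioo (0:ℝ) R := ⟨hm0, lt_trans hmb hbR⟩
    simp only [hvdef] at hlocal hvmneg
    exact core_min hq hε hKnn hm0 hlocal hvmneg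
      (hFK m ⟨hm0, le_of_lt (lt_trans hmb hbr₁)⟩)
      (phi0_props hm0).1
      (hbar0 m ⟨hm0, le_of_lt (lt_trans hmb hb.2)⟩)
      (hside m hmI)
  -- CASE B: `ub = lb` on (0, b₀); let r₀ be the first point where they separate
  · push_neg at hA
    set A : Set ℝ := {r | r ∈ Set.Ioc (0:ℝ) r₁ ∧ 0 < ub r - lb r} with hAdef
    have hAne : A.Nonempty := ⟨r₁, ⟨⟨hr₁0, le_rfl⟩, hwr₁⟩⟩
    have hAbdd : BddBelow A := ⟨0, fun x hx => hx.1.1.le⟩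
    set r₀ := sInf A with hr₀def
    have hr₀b₀ : b₀ ≤ r₀ := by
      refine le_csInf hAne (fun x hx => ?_)
      by_contra hlt
      push_neg at hlt
      exact absurd hx.2 (not_lt.2 (hA x ⟨hx.1.1, hlt⟩))
    have hr₀r₁ : r₀ ≤ r₁ := csInf_le hAbdd ⟨⟨hr₁0, le_rfl⟩, hwr₁⟩
    have hr₀I : r₀ ∈ Set.Ioo (0:ℝ) R :=
      ⟨lt_of_lt_of_le hb₀pos hr₀b₀, lt_of_le_of_lt hr₀r₁ hr₁R⟩
    have hwcont : ContinuousOn (fun r => ub r - lb r) (Set.Ioo 0 R) := hContU.sub hContL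
    have hwr₀cont : ContinuousAt (fun r => ub r - lb r) r₀ :=
      hwcont.continuousAt (isOpen_Ioo.mem_nhds hr₀I)
    have hwr₀ : ub r₀ - lb r₀ = 0 := by
      by_contra hne0
      have hpos : 0 < ub r₀ - lb r₀ := (hw0 r₀ hr₀I).lt_of_ne (Ne.symm hne0)
      have hev : ∀ᶠ x in 𝓝[<] r₀, 0 < ub x - lb x :=
        eventually_nhdsWithin_of_eventually_nhds (hwr₀cont.eventually_const_lt hpos)
      have hmem : ∀ᶠ x in 𝓝[<] r₀, x ∈ Set.Ioo (0:ℝ) r₀ :=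
        eventually_mem_set.2 (Ioo_mem_nhdsLT_of_mem ⟨hr₀I.1, le_rfl⟩)
      obtain ⟨x, hx1, hx2⟩ := (hev.and hmem).exists
      have : r₀ ≤ x := csInf_le hAbdd ⟨⟨hx2.1, le_trans hx2.2.le hr₀r₁⟩, hx1⟩
      linarith [hx2.2]
    have hwleft : ∀ x ∈ Set.Ioo (0:ℝ) r₀, ub x - lb x = 0 := by
      intro x hx
      rcases eq_or_lt_of_le (hw0 x ⟨hx.1, lt_trans hx.2 hr₀I.2⟩) with h | h
      · exact h.symm
      · exfalso
        have : r₀ ≤ x := csInf_le hAbdd ⟨⟨hx.1, le_trans hx.2.le hr₀r₁⟩, h⟩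
        linarith [hx.2]
    have hr₀r₁' : r₀ < r₁ :=
      lt_of_le_of_ne hr₀r₁ (fun h => by rw [h] at hwr₀; linarith)
    -- any left derivative of ub - lb at r₀ is 0; any right derivative is ≥ 0
    have hleft0 : ∀ d : ℝ, HasDerivWithinAt (fun r => ub r - lb r) d (Set.Iio r₀) r₀ → d = 0 := by
      intro d hd
      have hevz : (fun r => ub r - lb r) =ᶠ[𝓝[Set.Iio r₀] r₀] (fun _ => (0:ℝ)) := by
        have hmem : Set.Ioo (0:ℝ) r₀ ∈ 𝓝[Set.Iio r₀] r₀ :=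
          mem_nhdsWithin.2 ⟨Set.Ioi 0, isOpen_Ioi, hr₀I.1, fun x hx => ⟨hx.1, hx.2⟩⟩
        filter_upwards [hmem] with x hx using hwleft x hx
      have hzero : HasDerivWithinAt (fun r => ub r - lb r) 0 (Set.Iio r₀) r₀ :=
        (hasDerivWithinAt_const r₀ _ (0:ℝ)).congr_of_eventuallyEq hevz (by simpa using hwr₀)
      have h1 := hd.derivWithin (uniqueDiffWithinAt_Iio r₀)
      have h2 := hzero.derivWithin (uniqueDiffWithinAt_Iio r₀)
      rw [← h1, ← h2]
    have hright0 : ∀ d : ℝ, HasDerivWithinAt (fun r => ub r - lb r) d (Set.Ioi r₀) r₀ → 0 ≤ d := by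
      intro d hd
      refine slope_right_le hr₀I.2 (hasDerivWithinAt_const r₀ _ (0:ℝ)) hd hwr₀.symm ?_
      intro x hx
      exact hw0 x ⟨lt_trans hr₀I.1 hx.1, hx.2⟩
    rcases hside r₀ hr₀I with hsm | ⟨dl, dr, h1, h2, h3⟩
    swap
    · -- jump case: immediate contradiction
      have := hleft0 dl h1
      have := hright0 dr h2
      linarith
    -- smooth case: Hopf boundary-point argument at r₀
    have hwd : HasDerivAt (fun r => ub r - lb r) (deriv ub r₀ - deriv lb r₀) r₀ :=
      ((hsm.1.differentiableAt (by norm_num)).hasDerivAt).sub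
        ((hsm.2.1.differentiableAt (by norm_num)).hasDerivAt)
    have hwd0 : deriv ub r₀ - deriv lb r₀ = 0 := hleft0 _ hwd.hasDerivWithinAt
    obtain ⟨α, hαdef⟩ : ∃ α : ℝ, α = Real.sqrt (q/r₀^2 + K) + 1 := ⟨_, rfl⟩
    have hqr₀ : (0:ℝ) ≤ q/r₀^2 + K := by positivity
    have hα1 : 0 < α := by
      rw [hαdef]
      have := Real.sqrt_nonneg (q/r₀^2 + K); linarith
    have hα2 : q/r₀^2 + K < α^2 := by
      rw [hαdef]
      nlinarith [Real.sq_sqrt hqr₀, Real.sqrt_nonneg (q/r₀^2 + K)]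
    -- the exponential barrier
    have hbar1 : ∀ m ∈ Set.Icc r₀ r₁,
        K * (Real.exp (α*(m - r₀)) - 1) <
          deriv (deriv (fun r : ℝ => Real.exp (α*(r - r₀)) - 1)) m
            + (p/m) * deriv (fun r : ℝ => Real.exp (α*(r - r₀)) - 1) m
            - (q/m^2) * (Real.exp (α*(m - r₀)) - 1) := by
      intro m hm
      obtain ⟨hc2, hd1, hd2⟩ := hexp_props (α := α) (r₀ := r₀) (m := m)
      rw [hd1, hd2]
      have hm0 : 0 < m := lt_of_lt_of_le hr₀I.1 hm.1
      have hE1 : 1 ≤ Real.exp (α*(m - r₀)) := by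
        have h0 : (0:ℝ) ≤ α*(m - r₀) := mul_nonneg hα1.le (by linarith [hm.1])
        linarith [Real.add_one_le_exp (α*(m - r₀))]
      have hqm : q/m^2 ≤ q/r₀^2 := by
        have hr₀2 : (0:ℝ) < r₀^2 := pow_pos hr₀I.1 2
        have hm2 : r₀^2 ≤ m^2 := by nlinarith [hm.1, hr₀I.1]
        exact div_le_div_of_nonneg_left hq.le hr₀2 hm2
      have hp0 : (0:ℝ) ≤ (p/m) * (α * Real.exp (α*(m - r₀))) := by positivity
      have hq2 : (0:ℝ) < q/m^2 := div_pos hq (pow_pos hm0 2)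
      have hqr₀pos : (0:ℝ) < q/r₀^2 := div_pos hq (pow_pos hr₀I.1 2)
      have he1 : (q/m^2) * (Real.exp (α*(m - r₀)) - 1)
          ≤ (q/r₀^2) * (Real.exp (α*(m - r₀)) - 1) :=
        mul_le_mul_of_nonneg_right hqm (by linarith)
      have he2 : (q/r₀^2) * (Real.exp (α*(m - r₀)) - 1)
          ≤ (q/r₀^2) * Real.exp (α*(m - r₀)) :=
        mul_le_mul_of_nonneg_left (by linarith) hqr₀pos.le
      have hh2 : K * (Real.exp (α*(m - r₀)) - 1) ≤ K * Real.exp (α*(m - r₀)) :=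
        mul_le_mul_of_nonneg_left (by linarith) hKnn
      have hh3 : (q/r₀^2 + K) * Real.exp (α*(m - r₀)) < α^2 * Real.exp (α*(m - r₀)) :=
        mul_lt_mul_of_pos_right hα2 (by linarith)
      linarith [he1, he2, hh2, hh3, hp0]
    have hhr₁ : 0 < Real.exp (α*(r₁ - r₀)) - 1 := by
      have h0 : (0:ℝ) < α*(r₁ - r₀) := mul_pos hα1 (by linarith)
      linarith [Real.add_one_le_exp (α*(r₁ - r₀))]
    obtain ⟨ε, hεdef⟩ : ∃ ε : ℝ, ε = (ub r₁ - lb r₁) / (Real.exp (α*(r₁ - r₀)) - 1) := ⟨_, rfl⟩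
    have hε : 0 < ε := hεdef ▸ div_pos hwr₁ hhr₁
    obtain ⟨v, hvdef⟩ : ∃ v : ℝ → ℝ,
        v = fun r => ub r - lb r - ε * (Real.exp (α*(r - r₀)) - 1) := ⟨_, rfl⟩
    have hvr₀ : v r₀ = 0 := by
      rw [hvdef]
      show ub r₀ - lb r₀ - ε * (Real.exp (α*(r₀ - r₀)) - 1) = 0
      rw [hwr₀]
      simp
    have hvr₁ : v r₁ = 0 := by
      rw [hvdef]
      show ub r₁ - lb r₁ - ε * (Real.exp (α*(r₁ - r₀)) - 1) = 0
      rw [hεdef, div_mul_cancel₀ _ (ne_of_gt hhr₁)]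
      ring
    have hhcont : Continuous (fun r : ℝ => Real.exp (α*(r - r₀)) - 1) :=
      (Real.continuous_exp.comp (continuous_const.mul (continuous_id.sub continuous_const))).sub
        continuous_const
    have hIccI : Set.Icc r₀ r₁ ⊆ Set.Ioo 0 R := fun x hx =>
      ⟨lt_of_lt_of_le hr₀I.1 hx.1, lt_of_le_of_lt hx.2 hr₁R⟩
    have hvcont : ContinuousOn v (Set.Icc r₀ r₁) := by
      rw [hvdef]
      exact ((hwcont.mono hIccI).sub
        ((continuous_const.mul hhcont).continuousOn))
    obtain ⟨m, hmIcc, hmin⟩ := isCompact_Icc.exists_isMinOn (Set.nonempty_Icc.2 hr₀r₁'.le) hvcont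
    by_cases hvm : v m < 0
    · -- negative interior minimum: contradiction by the comparison argument
      have h1 : r₀ < m := lt_of_le_of_ne hmIcc.1 (by rintro rfl; linarith [hvr₀])
      have h2 : m < r₁ := lt_of_le_of_ne hmIcc.2 (by rintro rfl; linarith [hvr₁])
      have hlocal : IsLocalMin v m := hmin.isLocalMin (Icc_mem_nhds h1 h2)
      have hm0 : 0 < m := lt_trans hr₀I.1 h1
      have hmI : m ∈ Set.Ioo (0:ℝ) R := ⟨hm0, lt_trans h2 hr₁R⟩
      simp only [hvdef] at hlocal hvm
      exact core_min hq hε hKnn hm0 hlocal hvm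
        (hFK m ⟨hm0, h2.le⟩)
        (hexp_props (α := α) (r₀ := r₀) (m := m)).1
        (hbar1 m ⟨h1.le, h2.le⟩)
        (hside m hmI)
    · -- v ≥ 0 on [r₀, r₁]: compare right derivatives at r₀
      push_neg at hvm
      have hvpos : ∀ x ∈ Set.Ioo r₀ r₁, ε * (Real.exp (α*(x - r₀)) - 1) ≤ ub x - lb x := by
        intro x hx
        have h4 := hmin ⟨hx.1.le, hx.2.le⟩
        have h5 : 0 ≤ v x := le_trans hvm h4
        rw [hvdef] at h5
        simpa using h5
      have hwderiv : HasDerivWithinAt (fun r => ub r - lb r) 0 (Set.Ioi r₀) r₀ := by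
        have := hwd.hasDerivWithinAt (s := Set.Ioi r₀)
        rwa [hwd0] at this
      have hhd : HasDerivWithinAt (fun r : ℝ => ε * (Real.exp (α*(r - r₀)) - 1))
          (ε * (α * Real.exp (α*(r₀ - r₀)))) (Set.Ioi r₀) r₀ := by
        have hc2 := (hexp_props (α := α) (r₀ := r₀) (m := r₀)).1
        have hD : HasDerivAt (fun r : ℝ => Real.exp (α*(r - r₀)) - 1)
            (deriv (fun r : ℝ => Real.exp (α*(r - r₀)) - 1) r₀) r₀ :=
          (hc2.differentiableAt (by norm_num)).hasDerivAt
        rw [(hexp_props (α := α) (r₀ := r₀) (m := r₀)).2.1] at hD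
        exact (hD.const_mul ε).hasDerivWithinAt
      have hcmp := slope_right_le hr₀r₁' hhd hwderiv (by simp [hwr₀]) hvpos
      rw [sub_self, mul_zero, Real.exp_zero, mul_one] at hcmp
      nlinarith [mul_pos hε hα1, hcmp]
end

section
/- Monotonicity: Let 0 < R ≤ ∞ and let u be a solution of the boundary-value problem (⋆)&(BC) on (0,R). If r₁ ∈ [0,R) is the last zero of u, i.e. u(r₁) = 0 and u(r) > 0 for all r ∈ (r₁,R), then u is strictly increasing on (r₁,R). -/
open Set Filter Topology MeasureTheory
open scoped ENNReal NNReal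

/-- `u` is a solution of the boundary-value problem (⋆)&(BC) on `(0,R)` with `R ∈ (0,∞]`:
`u` is continuous on `[0,R)`, `C²` on `(0,R)`, satisfies (⋆) pointwise on `(0,R)`,
`u(0) = 0`, and `u(r) → s₊` as `r → R⁻` (for `R < ∞`) resp. `r → ∞` (for `R = ∞`). -/
def IsBVPSolution (p q : ℝ) (F : ℝ → ℝ) (sp : ℝ) (R : ℝ≥0∞) (u : ℝ → ℝ) : Prop :=
  ContinuousOn u {r : ℝ | 0 ≤ r ∧ ENNReal.ofReal r < R} ∧
    (∀ r : ℝ, 0 < r → ENNReal.ofReal r < R → ContDiffAt ℝ 2 u r) ∧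
    (∀ r : ℝ, 0 < r → ENNReal.ofReal r < R → ODEAt p q F u r) ∧
    u 0 = 0 ∧
    (∀ R' : ℝ, 0 < R' → R = ENNReal.ofReal R' →
      Filter.Tendsto u (nhdsWithin R' (Set.Iio R')) (nhds sp)) ∧
    (R = ⊤ → Filter.Tendsto u Filter.atTop (nhds sp))

/-- If `u` is `C²` at `r`, then `deriv u` is `C¹` at `r`. -/
lemma aux_deriv_contDiffAt {u : ℝ → ℝ} {r : ℝ} (h : ContDiffAt ℝ 2 u r) :
    ContDiffAt ℝ 1 (deriv u) r := by
  have h1 : ContDiffAt ℝ 1 (fderiv ℝ u) r := h.fderiv_right (by norm_num)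
  have h2 : ContDiffAt ℝ 1 (fun x => fderiv ℝ u x 1) r := h1.clm_apply contDiffAt_const
  exact h2.congr_of_eventuallyEq (Filter.Eventually.of_forall fun x => rfl)

/-- If `u` is `C²` at `c`, then it is differentiable near `c`. -/
lemma aux_eventually_diff {u : ℝ → ℝ} {c : ℝ} (h2 : ContDiffAt ℝ 2 u c) :
    ∀ᶠ y in 𝓝 c, DifferentiableAt ℝ u y := by
  obtain ⟨s, hs_open, hcs, hcd⟩ := h2.contDiffOn' le_rfl (by simp)
  rw [Set.insert_eq_self.2 (Set.mem_univ c), Set.univ_inter] at hcd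
  filter_upwards [hs_open.mem_nhds hcs] with y hy
  exact (hcd.differentiableOn (by norm_num)).differentiableAt (hs_open.mem_nhds hy)

/-- Second derivative test: no local max with vanishing first and positive second derivative. -/
lemma aux_second_deriv_test {u : ℝ → ℝ} {c : ℝ} (h2 : ContDiffAt ℝ 2 u c)
    (hd1 : deriv u c = 0) (hd2 : 0 < deriv (deriv u) c) (hmax : IsLocalMax u c) : False := by
  have hg : DifferentiableAt ℝ (deriv u) c :=
    (aux_deriv_contDiffAt h2).differentiableAt one_ne_zero
  have hgd : HasDerivAt (deriv u) (deriv (deriv u) c) c := hg.hasDerivAt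
  rw [hasDerivAt_iff_tendsto_slope] at hgd
  have hposslope : ∀ᶠ y in 𝓝[≠] c, 0 < slope (deriv u) c y :=
    hgd.eventually (eventually_gt_nhds hd2)
  have hposr : ∀ᶠ y in 𝓝[>] c, 0 < deriv u y := by
    have hmono : 𝓝[>] c ≤ 𝓝[≠] c :=
      nhdsWithin_mono c fun y hy => ne_of_gt hy
    filter_upwards [hposslope.filter_mono hmono, self_mem_nhdsWithin] with y hy hy'
    have hyc : 0 < y - c := sub_pos.mpr hy'
    have hslope : slope (deriv u) c y = deriv u y / (y - c) := by
      simp [slope_def_field, hd1]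
    rw [hslope] at hy
    have := mul_pos hy hyc
    rwa [div_mul_cancel₀ _ (ne_of_gt hyc)] at this
  obtain ⟨t, hct, hIoo⟩ := mem_nhdsGT_iff_exists_Ioo_subset.mp hposr
  obtain ⟨δ, hδpos, hδ⟩ := Metric.eventually_nhds_iff.mp ((aux_eventually_diff h2).and hmax)
  set z := min (c + δ/2) ((c + t)/2) with hz
  have hcz : c < z := by
    apply lt_min (by linarith)
    have : c < t := hct
    linarith
  have hzδ : z - c < δ := by
    have : z ≤ c + δ/2 := min_le_left _ _
    linarith
  have hsub : Icc c z ⊆ Metric.ball c δ := by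
    intro y hy
    rw [Metric.mem_ball, Real.dist_eq, abs_lt]
    constructor <;> [linarith [hy.1]; linarith [hy.2]]
  have hmono : StrictMonoOn u (Icc c z) := by
    apply strictMonoOn_of_deriv_pos (convex_Icc c z)
    · exact fun y hy =>
        ((hδ (by simpa [Real.dist_eq] using hsub hy)).1.continuousAt).continuousWithinAt
    · intro y hy
      rw [interior_Icc] at hy
      apply hIoo
      constructor
      · exact hy.1
      · have h1 : z ≤ (c + t)/2 := min_le_right _ _
        have : y < (c+t)/2 := lt_of_lt_of_le hy.2 h1
        linarith
  have h1 : u c < u z := hmono (left_mem_Icc.2 hcz.le) (right_mem_Icc.2 hcz.le) hcz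
  have h2' : u z ≤ u c :=
    (hδ (show dist z c < δ by rw [Real.dist_eq, abs_lt]; constructor <;> linarith)).2
  linarith

set_option maxHeartbeats 2000000 in
/-- a solution of (⋆)&(BC) is strictly increasing beyond its last zero. -/
theorem stmt11 (p q sp : ℝ) (hp : 0 ≤ p) (hq : 0 < q) (hsp : 0 < sp)
    (F : ℝ → ℝ) (hF : CondF F sp)
    (R : ℝ≥0∞) (hR : 0 < R) (u : ℝ → ℝ)
    (hu : IsBVPSolution p q F sp R u)
    (r₁ : ℝ) (hr₁0 : 0 ≤ r₁) (hr₁R : ENNReal.ofReal r₁ < R)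
    (hz : u r₁ = 0)
    (hpos : ∀ r : ℝ, r₁ < r → ENNReal.ofReal r < R → 0 < u r) :
    StrictMonoOn u {r : ℝ | r₁ < r ∧ ENNReal.ofReal r < R} := by
  obtain ⟨hcont, hC2, hODE, hu0, hbcfin, hbctop⟩ := hu
  obtain ⟨hFc1, hF0, hFsp, hFneg, hFpos, hFd⟩ := hF
  have hFcont : Continuous F := hFc1.continuous
  intro a ha b hb hab
  by_contra hba
  push_neg at hba
  obtain ⟨ha1, ha2⟩ : r₁ < a ∧ ENNReal.ofReal a < R := ha
  obtain ⟨hb1, hb2⟩ : r₁ < b ∧ ENNReal.ofReal b < R := hb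
  have hapos : 0 < u a := hpos a ha1 ha2
  -- maximum of u on [r₁, b]
  have hr₁b : r₁ ≤ b := hb1.le
  have hcontIcc : ContinuousOn u (Icc r₁ b) := hcont.mono (fun y hy =>
    ⟨hr₁0.trans hy.1, lt_of_le_of_lt (ENNReal.ofReal_le_ofReal hy.2) hb2⟩)
  obtain ⟨c₀, hc₀mem, hc₀max⟩ :=
    isCompact_Icc.exists_isMaxOn ⟨r₁, left_mem_Icc.2 hr₁b⟩ hcontIcc
  have hc₀max' : ∀ y ∈ Icc r₁ b, u y ≤ u c₀ := isMaxOn_iff.1 hc₀max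
  have haIcc : a ∈ Icc r₁ b := ⟨ha1.le, hab.le⟩
  obtain ⟨c, hc1, hcb, hcmax⟩ : ∃ c, r₁ < c ∧ c < b ∧ ∀ y ∈ Icc r₁ b, u y ≤ u c := by
    rcases eq_or_ne c₀ b with hcb | hcb
    · exact ⟨a, ha1, hab, fun y hy => ((hc₀max' y hy).trans (hcb ▸ hba))⟩
    · have hne : c₀ ≠ r₁ := by
        intro h0
        have := hc₀max' a haIcc
        rw [h0, hz] at this; linarith
      exact ⟨c₀, lt_of_le_of_ne hc₀mem.1 (Ne.symm hne), lt_of_le_of_ne hc₀mem.2 hcb, hc₀max'⟩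
  set M := u c with hM
  have h0c : 0 < c := hr₁0.trans_lt hc1
  have hMapos : 0 < M := lt_of_lt_of_le hapos (hcmax a haIcc)
  have hcR : ENNReal.ofReal c < R := lt_of_le_of_lt (ENNReal.ofReal_le_ofReal hcb.le) hb2
  have hlocmax : IsLocalMax u c :=
    Filter.eventually_of_mem (Icc_mem_nhds hc1 hcb) (fun y hy => hcmax y hy)
  have hdc : deriv u c = 0 := hlocmax.deriv_eq_zero
  -- M < sp
  have hMlt : M < sp := by
    by_contra hge
    push_neg at hge
    have hFM : 0 ≤ F M := by
      rcases eq_or_lt_of_le hge with h | h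
      · rw [← h, hFsp]
      · exact (hFpos M h).le
    have hODEc := hODE c h0c hcR
    unfold ODEAt at hODEc
    rw [← hM] at hODEc
    have hdd : deriv (deriv u) c = F M + q / c^2 * M := by
      rw [hdc] at hODEc
      linarith
    have hqM : 0 < q / c^2 * M := by positivity
    exact aux_second_deriv_test (hC2 c h0c hcR) hdc (by rw [hdd]; linarith) hlocmax
  -- a point T beyond b where u exceeds M
  obtain ⟨T, hbT, hTR, hTM⟩ : ∃ T, b < T ∧ ENNReal.ofReal T < R ∧ M < u T := by
    rcases eq_or_ne R ⊤ with hRtop | hRtop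
    · have htend := hbctop hRtop
      have hev : ∀ᶠ r in atTop, M < u r := htend.eventually (eventually_gt_nhds hMlt)
      obtain ⟨T, hT1, hT2⟩ := (hev.and (eventually_gt_atTop b)).exists
      exact ⟨T, hT2, by rw [hRtop]; exact ENNReal.ofReal_lt_top, hT1⟩
    · set R' := R.toReal with hR'
      have hR'pos : 0 < R' := ENNReal.toReal_pos (ne_of_gt hR) hRtop
      have hRR' : R = ENNReal.ofReal R' := (ENNReal.ofReal_toReal hRtop).symm
      have htend := hbcfin R' hR'pos hRR'
      have hbR' : b < R' := by
        rw [hRR'] at hb2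
        exact (ENNReal.ofReal_lt_ofReal_iff hR'pos).1 hb2
      have hev : ∀ᶠ r in 𝓝[<] R', M < u r := htend.eventually (eventually_gt_nhds hMlt)
      have hev2 : ∀ᶠ r in 𝓝[<] R', b < r ∧ r < R' :=
        Filter.eventually_of_mem (Ioo_mem_nhdsLT hbR') (fun y hy => ⟨hy.1, hy.2⟩)
      obtain ⟨T, hT1, hT2, hT3⟩ := (hev.and hev2).exists
      exact ⟨T, hT2, by rw [hRR']; exact (ENNReal.ofReal_lt_ofReal_iff hR'pos).2 hT3, hT1⟩
  -- definition of e : the first return to the level M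
  have hcT : c < T := hcb.trans hbT
  set S : Set ℝ := {r | r ∈ Icc c T ∧ M < u r} with hS
  have hTS : T ∈ S := ⟨⟨hcT.le, le_rfl⟩, hTM⟩
  have hSne : S.Nonempty := ⟨T, hTS⟩
  have hSbdd : BddBelow S := ⟨c, fun s hs => hs.1.1⟩
  set e := sInf S with he
  have heT : e ≤ T := csInf_le hSbdd hTS
  have hce : c ≤ e := le_csInf hSne (fun s hs => hs.1.1)
  have hptf : ∀ r ∈ Icc c T, 0 < r ∧ ENNReal.ofReal r < R := fun r hr =>
    ⟨h0c.trans_le hr.1, lt_of_le_of_lt (ENNReal.ofReal_le_ofReal hr.2) hTR⟩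
  have hCat : ∀ r ∈ Icc c T, ContinuousAt u r := fun r hr =>
    (hC2 r (hptf r hr).1 (hptf r hr).2).continuousAt
  have hSIoib : ∀ s ∈ S, b < s := by
    intro s hs
    by_contra hsb
    push_neg at hsb
    have : u s ≤ M := hcmax s ⟨hc1.le.trans hs.1.1, hsb⟩
    exact absurd hs.2 (not_lt.2 this)
  have hbe : b ≤ e := le_csInf hSne fun s hs => (hSIoib s hs).le
  have hcelt : c < e := hcb.trans_le hbe
  have hIcoM : ∀ r ∈ Ico c e, u r ≤ M := by
    intro r hr
    by_contra hM'
    push_neg at hM'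
    have hrS : r ∈ S := ⟨⟨hr.1, hr.2.le.trans heT⟩, hM'⟩
    exact absurd (csInf_le hSbdd hrS) (not_le.2 hr.2)
  have hueM : u e = M := by
    have hle : u e ≤ M := by
      have hcw : ContinuousWithinAt u (Iio e) e := (hCat e ⟨hce, heT⟩).continuousWithinAt
      refine le_of_tendsto hcw ?_
      filter_upwards [Ioo_mem_nhdsLT hcelt] with r hr
      exact hIcoM r ⟨hr.1.le, hr.2⟩
    have hge : M ≤ u e := by
      have hclosed : IsClosed (Icc c T ∩ u ⁻¹' (Ici M)) := by
        have hco : ContinuousOn u (Icc c T) := fun r hr => (hCat r hr).continuousWithinAt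
        exact hco.preimage_isClosed_of_isClosed isClosed_Icc isClosed_Ici
      have hsubset : closure S ⊆ Icc c T ∩ u ⁻¹' (Ici M) :=
        closure_minimal (fun s hs => ⟨hs.1, hs.2.le⟩) hclosed
      exact (hsubset (csInf_mem_closure hSne hSbdd)).2
    linarith
  have hIccM : ∀ r ∈ Icc c e, u r ≤ M := by
    intro r hr
    rcases lt_or_eq_of_le hr.2 with h | h
    · exact hIcoM r ⟨hr.1, h⟩
    · rw [h, hueM]
  have hIccpos : ∀ r ∈ Icc c e, 0 < u r := fun r hr =>
    hpos r (hc1.trans_le hr.1) (hptf r ⟨hr.1, hr.2.trans heT⟩).2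
  -- the dip point x
  obtain ⟨x, hx, hxM⟩ : ∃ x ∈ Ioo c e, u x < M := by
    by_contra hcon
    push_neg at hcon
    have heq : ∀ y ∈ Ioo c e, u y = M := fun y hy =>
      le_antisymm (hIcoM y ⟨hy.1.le, hy.2⟩) (hcon y hy)
    have key : ∀ y ∈ Ioo c e, q / y^2 * M = - F M := by
      intro y hy
      have h0y : 0 < y := h0c.trans hy.1
      have hyR : ENNReal.ofReal y < R := (hptf y ⟨hy.1.le, hy.2.le.trans heT⟩).2
      have hODEy := hODE y h0y hyR
      unfold ODEAt at hODEy
      have hd1 : deriv u =ᶠ[𝓝 y] fun _ => 0 := by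
        filter_upwards [Ioo_mem_nhds hy.1 hy.2] with z hzmem
        have hcz : u =ᶠ[𝓝 z] fun _ => M :=
          Filter.eventually_of_mem (Ioo_mem_nhds hzmem.1 hzmem.2) heq
        rw [hcz.deriv_eq, deriv_const]
      have hdd : deriv (deriv u) y = 0 := by rw [hd1.deriv_eq, deriv_const]
      have hdy : deriv u y = 0 := hd1.eq_of_nhds
      rw [hdd, hdy, heq y hy] at hODEy
      linarith
    set y₁ := c + (e - c)/3 with hy₁def
    set y₂ := c + (e - c)/2 with hy₂def
    have hec : 0 < e - c := sub_pos.2 hcelt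
    have hy₁ : y₁ ∈ Ioo c e := ⟨by rw [hy₁def]; linarith, by rw [hy₁def]; linarith⟩
    have hy₂ : y₂ ∈ Ioo c e := ⟨by rw [hy₂def]; linarith, by rw [hy₂def]; linarith⟩
    have h12 : y₁ < y₂ := by rw [hy₁def, hy₂def]; linarith
    have h0y₁ : 0 < y₁ := h0c.trans hy₁.1
    have k1 := key y₁ hy₁
    have k2 := key y₂ hy₂
    have hlt : q / y₂^2 < q / y₁^2 :=
      div_lt_div_of_pos_left hq (by positivity) (pow_lt_pow_left₀ h12 h0y₁.le (by norm_num))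
    nlinarith [hMapos]
  -- the energy function Φ
  set G : ℝ → ℝ := fun s => ∫ t in (0:ℝ)..s, F t with hGdef
  have hG : ∀ t : ℝ, HasDerivAt G (F t) t := fun t =>
    (hFcont.integral_hasStrictDerivAt 0 t).hasDerivAt
  set Φ : ℝ → ℝ := fun r =>
    (deriv u r)^2/2 - G (u r) - q*(u r)^2/(2*r^2) + q*M^2/(2*r^2) with hΦdef
  have hΦderiv : ∀ r ∈ Icc c e,
      HasDerivAt Φ (-(p/r)*(deriv u r)^2 + q*((u r)^2 - M^2)/r^3) r := by
    intro r hr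
    have h0r : 0 < r := (hptf r ⟨hr.1, hr.2.trans heT⟩).1
    have hrR := (hptf r ⟨hr.1, hr.2.trans heT⟩).2
    have hC2r := hC2 r h0r hrR
    have hu' : HasDerivAt u (deriv u r) r :=
      (hC2r.differentiableAt (by norm_num)).hasDerivAt
    have hu'' : HasDerivAt (deriv u) (deriv (deriv u) r) r :=
      ((aux_deriv_contDiffAt hC2r).differentiableAt one_ne_zero).hasDerivAt
    have hr2 : (2:ℝ)*r^2 ≠ 0 := by positivity
    have h1 : HasDerivAt (fun s => (deriv u s)^2/2) (deriv u r * deriv (deriv u) r) r := by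
      have h := (hu''.pow 2).div_const 2
      refine h.congr_deriv ?_
      push_cast
      ring
    have h2 : HasDerivAt (fun s => G (u s)) (F (u r) * deriv u r) r := (hG (u r)).comp r hu'
    have hden : HasDerivAt (fun s : ℝ => 2*s^2) ((2:ℝ)*(2*r^(2-1))) r :=
      (hasDerivAt_pow 2 r).const_mul (2:ℝ)
    have h3 := ((hu'.pow 2).const_mul q).div hden hr2
    have h4 := (hasDerivAt_const r (q*M^2)).div hden hr2
    have htot := ((h1.sub h2).sub h3).add h4
    refine htot.congr_deriv ?_
    have hODEr := hODE r h0r hrR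
    unfold ODEAt at hODEr
    have hddr : deriv (deriv u) r = F (u r) + (q/r^2)*(u r) - (p/r)*deriv u r := by linarith
    rw [hddr]
    simp only [Pi.pow_apply]
    have hrne : r ≠ 0 := ne_of_gt h0r
    field_simp
    ring
  have hΦcont : ContinuousOn Φ (Icc c e) := fun r hr =>
    ((hΦderiv r hr).continuousAt).continuousWithinAt
  have hΦanti : AntitoneOn Φ (Icc c e) := by
    apply antitoneOn_of_deriv_nonpos (convex_Icc c e) hΦcont
    · intro r hr
      rw [interior_Icc] at hr
      exact ((hΦderiv r (Ioo_subset_Icc_self hr)).differentiableAt).differentiableWithinAt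
    · intro r hr
      rw [interior_Icc] at hr
      have hrI := Ioo_subset_Icc_self hr
      rw [(hΦderiv r hrI).deriv]
      have h0r : 0 < r := (hptf r ⟨hrI.1, hrI.2.trans heT⟩).1
      have hu2 : (u r)^2 ≤ M^2 := pow_le_pow_left₀ (hIccpos r hrI).le (hIccM r hrI) 2
      have t1 : 0 ≤ (p/r)*(deriv u r)^2 := by positivity
      have t2 : q*((u r)^2 - M^2)/r^3 ≤ 0 :=
        div_nonpos_of_nonpos_of_nonneg (by nlinarith) (by positivity)
      linarith
  -- strict decrease at the dip point
  have hxIcc : x ∈ Icc c e := Ioo_subset_Icc_self hx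
  have h0x : 0 < x := (hptf x ⟨hxIcc.1, hxIcc.2.trans heT⟩).1
  have hdxneg : -(p/x)*(deriv u x)^2 + q*((u x)^2 - M^2)/x^3 < 0 := by
    have h1 : (u x)^2 < M^2 := pow_lt_pow_left₀ hxM (hIccpos x hxIcc).le (by norm_num)
    have t2 : q*((u x)^2 - M^2)/x^3 < 0 :=
      div_neg_of_neg_of_pos (by nlinarith) (by positivity)
    have t1 : 0 ≤ (p/x)*(deriv u x)^2 := by positivity
    linarith
  obtain ⟨y, hxy, hye, hΦy⟩ : ∃ y, x < y ∧ y < e ∧ Φ y < Φ x := by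
    have hΦx := hΦderiv x hxIcc
    rw [hasDerivAt_iff_tendsto_slope] at hΦx
    have hneg : ∀ᶠ z in 𝓝[≠] x, slope Φ x z < 0 := hΦx.eventually (eventually_lt_nhds hdxneg)
    have hmono2 : 𝓝[>] x ≤ 𝓝[≠] x := nhdsWithin_mono x fun z hz => ne_of_gt hz
    have hIooev : ∀ᶠ z in 𝓝[>] x, z ∈ Ioo x e :=
      Filter.eventually_of_mem (Ioo_mem_nhdsGT hx.2) (fun _ h => h)
    obtain ⟨z, hzslope, hzIoo⟩ := ((hneg.filter_mono hmono2).and hIooev).exists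
    refine ⟨z, hzIoo.1, hzIoo.2, ?_⟩
    have hzx : 0 < z - x := sub_pos.2 hzIoo.1
    rw [slope_def_field] at hzslope
    have hmul := mul_neg_of_neg_of_pos hzslope hzx
    rw [div_mul_cancel₀ _ (ne_of_gt hzx)] at hmul
    linarith
  -- contradiction
  have hyIcc : y ∈ Icc c e := ⟨(hx.1.trans hxy).le, hye.le⟩
  have hchain1 : Φ x ≤ Φ c := hΦanti (left_mem_Icc.2 hce) hxIcc hxIcc.1
  have hchain2 : Φ e ≤ Φ y := hΦanti hyIcc (right_mem_Icc.2 hce) hye.le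
  have hΦc : Φ c = - G M := by
    simp only [hΦdef]
    rw [hdc, ← hM]
    ring
  have hΦe : Φ e = (deriv u e)^2/2 - G M := by
    simp only [hΦdef]
    rw [hueM]
    ring
  have hfin : Φ e < Φ c := lt_of_le_of_lt hchain2 (lt_of_lt_of_le hΦy hchain1)
  rw [hΦc, hΦe] at hfin
  nlinarith [sq_nonneg (deriv u e)]
end

section
/- Two-sided barrier: Assume in addition that there exists s_- < 0 such that F(t) > 0 for t ∈ (s_-, 0) and F(t) ≤ 0 for t ≤ s_-. Let 0 < R ≤ ∞. Then every solution u of the boundary-value problem (⋆)&(BC) on (0,R) (with no sign assumption) satisfies s_- < u(r) < s_+ for all r ∈ (0,R). -/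
open Set Filter Topology MeasureTheory
open scoped ENNReal NNReal

lemma aux_open_c2 {u : ℝ → ℝ} {a : ℝ} (h : ContDiffAt ℝ 2 u a) :
    ∃ s : Set ℝ, IsOpen s ∧ a ∈ s ∧ ContinuousOn u s ∧ DifferentiableOn ℝ (deriv u) s := by
  obtain ⟨s, hs, hcd⟩ := h.contDiffOn le_rfl (by norm_num)
  refine ⟨interior s, isOpen_interior, mem_interior_iff_mem_nhds.2 hs, ?_, ?_⟩
  · exact (hcd.mono interior_subset).continuousOn
  · have h2 : ContDiffOn ℝ ((1:ℕ) + 1) u (interior s) := by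
      exact_mod_cast hcd.mono interior_subset
    rw [contDiffOn_succ_iff_deriv_of_isOpen isOpen_interior] at h2
    exact h2.2.2.differentiableOn (by simp)

/-- Second derivative test: at an interior local max of a C² function, `u'' ≤ 0`. -/
lemma aux_second_deriv_nonpos {u : ℝ → ℝ} {a : ℝ} (hC : ContDiffAt ℝ 2 u a)
    (h : IsLocalMax u a) : deriv (deriv u) a ≤ 0 := by
  by_contra hpos
  push_neg at hpos
  obtain ⟨s, hso, has, hcont, hdiff⟩ := aux_open_c2 hC
  have h1 : deriv u a = 0 := h.deriv_eq_zero
  have hD : HasDerivAt (deriv u) (deriv (deriv u) a) a :=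
    ((hdiff a has).differentiableAt (hso.mem_nhds has)).hasDerivAt
  -- slope of `deriv u` tends to a positive number, so `deriv u > 0` just right of `a`
  have hslope := hasDerivAt_iff_tendsto_slope.1 hD
  have hev : ∀ᶠ x in 𝓝[>] a, 0 < deriv u x := by
    have h2 : ∀ᶠ x in 𝓝[≠] a, 0 < slope (deriv u) a x :=
      hslope.eventually (eventually_gt_nhds hpos)
    have h3 : ∀ᶠ x in 𝓝[>] a, 0 < slope (deriv u) a x :=
      h2.filter_mono (nhdsWithin_mono a fun x hx => ne_of_gt hx)
    filter_upwards [h3, self_mem_nhdsWithin] with x hx hx'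
    rw [slope_def_field, h1, sub_zero, div_pos_iff] at hx
    rcases hx with ⟨h4, _⟩ | ⟨_, h5⟩
    · exact h4
    · linarith [sub_pos.2 (mem_Ioi.1 hx')]
  obtain ⟨e, hea, hsub⟩ := mem_nhdsGT_iff_exists_Ioo_subset.1 hev
  -- also take a ball where `u ≤ u a` and which is inside `s`
  obtain ⟨ε, hε, hball⟩ := Metric.eventually_nhds_iff.1 (h.filter_mono (le_refl _))
  obtain ⟨δ, hδ, hballs⟩ := Metric.isOpen_iff.1 hso a has
  set b := min e (a + min ε δ / 2) with hb
  have hab : a < b := lt_min (mem_Ioi.1 hea) (by have := lt_min hε hδ; linarith)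
  have hbs : Icc a b ⊆ s := by
    intro x hx
    apply hballs
    rw [Metric.mem_ball, Real.dist_eq, abs_lt]
    constructor
    · linarith [hx.1, hδ]
    · have := hx.2
      have : x ≤ a + min ε δ / 2 := le_trans this (min_le_right _ _)
      have h6 : min ε δ ≤ δ := min_le_right _ _
      linarith
  have hmono : StrictMonoOn u (Icc a b) := by
    apply strictMonoOn_of_deriv_pos (convex_Icc a b) (hcont.mono hbs)
    intro x hx
    rw [interior_Icc] at hx
    exact hsub ⟨hx.1, lt_of_lt_of_le hx.2 (min_le_left _ _)⟩
  have h7 : u a < u b := hmono (left_mem_Icc.2 hab.le) (right_mem_Icc.2 hab.le) hab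
  have h8 : u b ≤ u a := by
    apply hball
    rw [Real.dist_eq, abs_lt]
    have : b ≤ a + min ε δ / 2 := min_le_right _ _
    have h6 : min ε δ ≤ ε := min_le_left _ _
    constructor <;> [linarith [hab]; linarith]
  linarith

lemma aux_localmax_contra {p q b : ℝ} (hq : 0 < q) (hb : 0 < b)
    {G u : ℝ → ℝ} {r1 : ℝ} (hr1 : 0 < r1) (hC : ContDiffAt ℝ 2 u r1)
    (hode : ODEAt p q G u r1) (hmax : IsLocalMax u r1)
    (hub : b ≤ u r1) (hG : 0 ≤ G (u r1)) : False := by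
  have h1 : deriv u r1 = 0 := hmax.deriv_eq_zero
  have h2 : deriv (deriv u) r1 ≤ 0 := aux_second_deriv_nonpos hC hmax
  unfold ODEAt at hode
  rw [h1] at hode
  have h3 : 0 < q / r1 ^ 2 * u r1 := by
    apply mul_pos (div_pos hq (by positivity))
    linarith
  nlinarith

lemma aux_upper {p q b l : ℝ} (hq : 0 < q) (hb : 0 < b) (hl : l ≤ b)
    {G u : ℝ → ℝ} (hG : ∀ t, b ≤ t → 0 ≤ G t)
    {R : ℝ≥0∞}
    (hcont : ContinuousOn u {r : ℝ | 0 ≤ r ∧ ENNReal.ofReal r < R})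
    (hC2 : ∀ r : ℝ, 0 < r → ENNReal.ofReal r < R → ContDiffAt ℝ 2 u r)
    (hode : ∀ r : ℝ, 0 < r → ENNReal.ofReal r < R → ODEAt p q G u r)
    (h0 : u 0 = 0)
    (hbc1 : ∀ R' : ℝ, 0 < R' → R = ENNReal.ofReal R' → Tendsto u (𝓝[<] R') (𝓝 l))
    (hbc2 : R = ⊤ → Tendsto u atTop (𝓝 l)) :
    ∀ r : ℝ, 0 < r → ENNReal.ofReal r < R → u r < b := by
  intro r0 hr0 hr0R
  by_contra hcon
  push_neg at hcon
  have hO : IsOpen {r : ℝ | 0 < r ∧ ENNReal.ofReal r < R} := by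
    have : {r : ℝ | 0 < r ∧ ENNReal.ofReal r < R} =
        Ioi 0 ∩ ENNReal.ofReal ⁻¹' (Iio R) := rfl
    rw [this]
    exact isOpen_Ioi.inter (isOpen_Iio.preimage ENNReal.continuous_ofReal)
  by_cases hex : ∃ r : ℝ, 0 < r ∧ ENNReal.ofReal r < R ∧ b < u r
  · obtain ⟨rs, hrs, hrsR, hc⟩ := hex
    set c := u rs with hcdef
    set m := (l + c) / 2 with hm
    have hmc : m < c := by rw [hm]; linarith
    have hlm : l < m := by rw [hm]; linarith
    have key : ∃ T : ℝ, rs ≤ T ∧ ENNReal.ofReal T < R ∧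
        ∀ r : ℝ, T < r → ENNReal.ofReal r < R → u r < m := by
      by_cases htop : R = ⊤
      · obtain ⟨T0, hT0⟩ := eventually_atTop.1
          ((hbc2 htop).eventually (eventually_lt_nhds hlm))
        refine ⟨max rs T0, le_max_left _ _, by rw [htop]; exact ENNReal.ofReal_lt_top, ?_⟩
        intro r hr _
        exact hT0 r (le_of_lt (lt_of_le_of_lt (le_max_right rs T0) hr))
      · set R' := R.toReal with hR'
        have hRpos : 0 < R := lt_of_le_of_lt zero_le hrsR
        have hR'pos : 0 < R' := ENNReal.toReal_pos hRpos.ne' htop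
        have hRR' : R = ENNReal.ofReal R' := (ENNReal.ofReal_toReal htop).symm
        have hbc := hbc1 R' hR'pos hRR'
        have hev : {x : ℝ | u x < m} ∈ 𝓝[<] R' :=
          hbc.eventually (eventually_lt_nhds hlm)
        obtain ⟨T0, hT0R, hT0⟩ := mem_nhdsLT_iff_exists_Ioo_subset.1 hev
        have hrsR' : rs < R' := by
          rwa [hRR', ENNReal.ofReal_lt_ofReal_iff hR'pos] at hrsR
        refine ⟨max rs T0, le_max_left _ _, ?_, ?_⟩
        · rw [hRR']
          exact (ENNReal.ofReal_lt_ofReal_iff hR'pos).2 (max_lt hrsR' hT0R)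
        · intro r hr hrR
          have hrR' : r < R' := by
            rwa [hRR', ENNReal.ofReal_lt_ofReal_iff hR'pos] at hrR
          exact hT0 ⟨lt_of_le_of_lt (le_max_right _ _) hr, hrR'⟩
    obtain ⟨T, hrsT, hTR, hT⟩ := key
    have hT0 : (0:ℝ) ≤ T := le_trans hrs.le hrsT
    have hIccsub : Icc 0 T ⊆ {r : ℝ | 0 ≤ r ∧ ENNReal.ofReal r < R} :=
      fun x hx => ⟨hx.1, lt_of_le_of_lt (ENNReal.ofReal_le_ofReal hx.2) hTR⟩
    obtain ⟨r1, hr1mem, hr1max⟩ := isCompact_Icc.exists_isMaxOn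
      (nonempty_Icc.2 hT0) (hcont.mono hIccsub)
    have hcr1 : c ≤ u r1 := hr1max ⟨hrs.le, hrsT⟩
    have hbr1 : b < u r1 := lt_of_lt_of_le hc hcr1
    have hr1pos : 0 < r1 := by
      rcases hr1mem.1.lt_or_eq with h | h
      · exact h
      · exfalso; rw [← h, h0] at hbr1; linarith
    have hr1R : ENNReal.ofReal r1 < R :=
      lt_of_le_of_lt (ENNReal.ofReal_le_ofReal hr1mem.2) hTR
    have hmax : IsLocalMax u r1 := by
      filter_upwards [hO.mem_nhds ⟨hr1pos, hr1R⟩] with x hx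
      by_cases hxT : x ≤ T
      · exact hr1max ⟨hx.1.le, hxT⟩
      · push_neg at hxT
        exact le_trans (hT x hxT hx.2).le (le_trans hmc.le hcr1)
    exact aux_localmax_contra hq hb hr1pos (hC2 r1 hr1pos hr1R)
      (hode r1 hr1pos hr1R) hmax hbr1.le (hG _ hbr1.le)
  · push_neg at hex
    have heq : u r0 = b := le_antisymm (hex r0 hr0 hr0R) hcon
    have hmax : IsLocalMax u r0 := by
      filter_upwards [hO.mem_nhds ⟨hr0, hr0R⟩] with x hx
      rw [heq]
      exact hex x hx.1 hx.2
    exact aux_localmax_contra hq hb hr0 (hC2 r0 hr0 hr0R)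
      (hode r0 hr0 hr0R) hmax heq.ge (hG _ heq.ge)

/-- two-sided barrier: any solution of (⋆)&(BC) satisfies `s₋ < u < s₊`. -/
theorem stmt16 (p q sp : ℝ) (hp : 0 ≤ p) (hq : 0 < q) (hsp : 0 < sp)
    (F : ℝ → ℝ) (hF : CondF F sp)
    (sm : ℝ) (hsm : sm < 0)
    (hFpos : ∀ t ∈ Set.Ioo sm 0, 0 < F t)
    (hFneg : ∀ t ≤ sm, F t ≤ 0)
    (R : ℝ≥0∞) (hR : 0 < R) (u : ℝ → ℝ)
    (hu : IsBVPSolution p q F sp R u) :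
    ∀ r : ℝ, 0 < r → ENNReal.ofReal r < R → sm < u r ∧ u r < sp := by
  obtain ⟨hFC, hF0, hFsp, hFIoo, hFgt, hF'⟩ := hF
  obtain ⟨hcont, hC2, hode, h0, hbc1, hbc2⟩ := hu
  intro r hr hrR
  constructor
  · -- lower bound via `-u`
    have hodeneg : ∀ r : ℝ, 0 < r → ENNReal.ofReal r < R →
        ODEAt p q (fun t => -F (-t)) (fun x => -u x) r := by
      intro r hr hrR
      have h := hode r hr hrR
      have e1 : deriv (fun x => -u x) = fun x => -deriv u x := funext fun x => deriv.neg
      have e2 : deriv (deriv (fun x => -u x)) r = -deriv (deriv u) r := by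
        rw [e1]; exact deriv.neg
      unfold ODEAt at h ⊢
      rw [e2, e1]
      simp only [neg_neg]
      linarith [h]
    have key := aux_upper (p := p) hq (b := -sm) (l := -sp) (by linarith) (by linarith)
      (G := fun t => -F (-t)) (u := fun x => -u x)
      (fun t ht => by
        have h1 : -t ≤ sm := by linarith
        simpa using neg_nonneg.2 (hFneg _ h1))
      hcont.neg (fun r hr hrR => (hC2 r hr hrR).neg) hodeneg (by simp [h0])
      (fun R' h1 h2 => (hbc1 R' h1 h2).neg) (fun h => (hbc2 h).neg) r hr hrR
    simpa using neg_lt_neg_iff.1 (by simpa using key)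
  · exact aux_upper (p := p) hq hsp le_rfl
      (fun t ht => by
        rcases ht.eq_or_lt with h | h
        · rw [← h, hFsp]
        · exact (hFgt t h).le)
      hcont hC2 hode h0 hbc1 hbc2 r hr hrR
end

section
/- Singular Hopf lemma: Let a > 1, let 0 < R ≤ ∞, and let c : [0,R) → ℝ be continuous. Suppose w is continuous on [0,R), C² on (0,R), satisfies w(r) ≥ 0 for all r ∈ [0,R) and w''(r) + (a/r)·w'(r) + c(r)·w(r) ≤ 0 for all r ∈ (0,R). If w(0) = 0, then w ≡ 0 on [0,R). -/
open Set Filter Topology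
open scoped ENNReal

lemma stmt19_step (a : ℝ) (ha : 1 < a) (c w : ℝ → ℝ) (ρ r₁ r₂ M : ℝ)
    (hρ : 0 < ρ) (hr₁ : 0 ≤ r₁) (h12 : r₁ < r₂) (h2ρ : r₂ ≤ ρ)
    (hM : 0 ≤ M) (hMc : ∀ r ∈ Icc (0:ℝ) ρ, -c r ≤ M)
    (hwcont : ContinuousOn w (Icc (0:ℝ) ρ))
    (hwd : ∀ r ∈ Ioc (0:ℝ) ρ, DifferentiableAt ℝ w r)
    (hwd2 : ∀ r ∈ Ioc (0:ℝ) ρ, DifferentiableAt ℝ (deriv w) r)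
    (hwnn : ∀ r ∈ Icc (0:ℝ) ρ, 0 ≤ w r)
    (hineq : ∀ r ∈ Ioc (0:ℝ) ρ, deriv (deriv w) r + (a / r) * deriv w r + c r * w r ≤ 0)
    (hzero : ∀ s ∈ Icc (0:ℝ) r₁, w s = 0)
    (hsmall : M * r₂ * (r₂ - r₁) < a + 1) :
    ∀ s ∈ Icc (0:ℝ) r₂, w s = 0 := by
  have hr₂pos : 0 < r₂ := lt_of_le_of_lt hr₁ h12
  have hsub : Icc (0:ℝ) r₂ ⊆ Icc (0:ℝ) ρ := Icc_subset_Icc le_rfl h2ρ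
  have ha1 : (0:ℝ) < a + 1 := by linarith
  obtain ⟨m, hm, hmax⟩ := isCompact_Icc.exists_isMaxOn
    (⟨0, le_refl (0:ℝ), hr₂pos.le⟩ : (Icc (0:ℝ) r₂).Nonempty) (hwcont.mono hsub)
  set W := w m with hWdef
  have hW0 : 0 ≤ W := hwnn m (hsub hm)
  set K := M * W / (a + 1) with hKdef
  have hK0 : 0 ≤ K := by positivity
  have hKW : K * (a + 1) = M * W := by
    rw [hKdef]; field_simp
  set g : ℝ → ℝ := fun r => r ^ a * deriv w r - K * r ^ (a + 1) with hgdef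
  -- derivative of g
  have hgd : ∀ r ∈ Ioc (0:ℝ) r₂, HasDerivAt g
      (a * r ^ (a - 1) * deriv w r + r ^ a * deriv (deriv w) r - K * ((a + 1) * r ^ a)) r := by
    intro r hr
    have hrρ : r ∈ Ioc (0:ℝ) ρ := ⟨hr.1, hr.2.trans h2ρ⟩
    have h1 : HasDerivAt (fun x : ℝ => x ^ a) (a * r ^ (a - 1)) r :=
      Real.hasDerivAt_rpow_const (Or.inl hr.1.ne')
    have h2 : HasDerivAt (deriv w) (deriv (deriv w) r) r := (hwd2 r hrρ).hasDerivAt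
    have h3 : HasDerivAt (fun x : ℝ => x ^ (a + 1)) ((a + 1) * r ^ (a + 1 - 1)) r :=
      Real.hasDerivAt_rpow_const (Or.inl hr.1.ne')
    rw [show a + 1 - 1 = a by ring] at h3
    exact (h1.mul h2).sub (h3.const_mul K)
  have hgderiv_le : ∀ r ∈ Ioo (0:ℝ) r₂, deriv g r ≤ 0 := by
    intro r hr
    rw [(hgd r ⟨hr.1, hr.2.le⟩).deriv]
    have hrρ : r ∈ Ioc (0:ℝ) ρ := ⟨hr.1, (hr.2.trans_le h2ρ).le⟩
    have hP : 0 < r ^ a := Real.rpow_pos_of_pos hr.1 a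
    have hQ : r ^ (a - 1) * r = r ^ a := by
      rw [← Real.rpow_add_one hr.1.ne' (a - 1)]; ring_nf
    have hiq := hineq r hrρ
    have hwr0 : 0 ≤ w r := hwnn r ⟨hr.1.le, hrρ.2⟩
    have hcw : -(c r * w r) ≤ M * W := by
      have h1 : -c r * w r ≤ M * w r :=
        mul_le_mul_of_nonneg_right (hMc r ⟨hr.1.le, hrρ.2⟩) hwr0
      have h2 : M * w r ≤ M * W := mul_le_mul_of_nonneg_left (hmax ⟨hr.1.le, hr.2.le⟩) hM
      nlinarith
    have hmul : r ^ a * (deriv (deriv w) r + a / r * deriv w r + c r * w r) ≤ 0 :=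
      mul_nonpos_of_nonneg_of_nonpos hP.le hiq
    have hrne : r ≠ 0 := hr.1.ne'
    have har : r ^ a * (a / r * deriv w r) = a * r ^ (a - 1) * deriv w r :=
      calc r ^ a * (a / r * deriv w r)
          = a * r ^ (a - 1) * deriv w r * (r * r⁻¹) := by
            rw [← hQ, div_eq_mul_inv]; ring
        _ = a * r ^ (a - 1) * deriv w r := by rw [mul_inv_cancel₀ hrne, mul_one]
    have h5 : r ^ a * deriv (deriv w) r + a * r ^ (a - 1) * deriv w r
        + r ^ a * (c r * w r) ≤ 0 := by
      rw [mul_add, mul_add, har] at hmul; linarith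
    have h6 : r ^ a * (-(c r * w r)) ≤ r ^ a * (M * W) :=
      mul_le_mul_of_nonneg_left hcw hP.le
    have h7 : K * ((a + 1) * r ^ a) = r ^ a * (M * W) := by rw [← hKW]; ring
    nlinarith
  have contg : ContinuousOn g (Ioc (0:ℝ) r₂) :=
    fun r hr => ((hgd r hr).differentiableAt).continuousAt.continuousWithinAt
  have hganti : AntitoneOn g (Ioc (0:ℝ) r₂) := by
    apply antitoneOn_of_deriv_nonpos (convex_Ioc (0:ℝ) r₂) contg
    · rw [interior_Ioc]
      exact fun r hr => ((hgd r ⟨hr.1, hr.2.le⟩).differentiableAt).differentiableWithinAt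
    · rw [interior_Ioc]; exact hgderiv_le
  -- Claim A : g ≤ 0 on Ioc 0 r₂
  have hgle : ∀ t ∈ Ioc (0:ℝ) r₂, g t ≤ 0 := by
    by_contra hcon
    push_neg at hcon
    obtain ⟨t, ht, hgt⟩ := hcon
    set β := g t with hβdef
    have hβ : 0 < β := hgt
    have ha1' : (1:ℝ) - a < 0 := by linarith
    have hane : (1:ℝ) - a ≠ 0 := by linarith
    have hane' : a - 1 ≠ 0 := by linarith
    -- lower bound for deriv w
    have hwd_lb : ∀ r ∈ Ioc (0:ℝ) t, β * r ^ (-a) ≤ deriv w r := by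
      intro r hr
      have hrt : r ∈ Ioc (0:ℝ) r₂ := ⟨hr.1, hr.2.trans ht.2⟩
      have hgr : β ≤ g r := hganti hrt ht hr.2
      have hP : 0 < r ^ a := Real.rpow_pos_of_pos hr.1 a
      have hKr : 0 ≤ K * r ^ (a + 1) := mul_nonneg hK0 (Real.rpow_nonneg hr.1.le _)
      have hb : β ≤ r ^ a * deriv w r := by
        rw [hgdef] at hgr; simp only at hgr; linarith
      rw [Real.rpow_neg hr.1.le, ← div_eq_mul_inv]
      rw [div_le_iff₀ hP]
      nlinarith
    -- monotonicity of w - antiderivative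
    have hGmono : ∀ δ ∈ Ioo (0:ℝ) t,
        w δ + β / (a - 1) * δ ^ (1 - a) - β / (a - 1) * t ^ (1 - a) ≤ w t := by
      intro δ hδ
      set G : ℝ → ℝ := fun r => w r - β / (1 - a) * r ^ (1 - a) with hGdef
      have hsub2 : Icc δ t ⊆ Icc (0:ℝ) ρ :=
        Icc_subset_Icc hδ.1.le (ht.2.trans h2ρ)
      have hGd : ∀ r ∈ Ioo δ t, HasDerivAt G (deriv w r - β * r ^ (-a)) r := by
        intro r hr
        have hrpos : 0 < r := hδ.1.trans hr.1
        have hrρ : r ∈ Ioc (0:ℝ) ρ := ⟨hrpos, (hr.2.trans_le ht.2).le.trans h2ρ⟩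
        have h1 : HasDerivAt (fun x : ℝ => x ^ (1 - a)) ((1 - a) * r ^ (1 - a - 1)) r :=
          Real.hasDerivAt_rpow_const (Or.inl hrpos.ne')
        rw [show (1:ℝ) - a - 1 = -a by ring] at h1
        have h2 := (hwd r hrρ).hasDerivAt.sub (h1.const_mul (β / (1 - a)))
        have e : β / (1 - a) * ((1 - a) * r ^ (-a)) = β * r ^ (-a) := by
          field_simp
        rw [e] at h2
        exact h2
      have hGmono' : MonotoneOn G (Icc δ t) := by
        apply monotoneOn_of_deriv_nonneg (convex_Icc δ t)
        · apply ContinuousOn.sub (hwcont.mono hsub2)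
          intro r hr
          have hrpos : 0 < r := lt_of_lt_of_le hδ.1 hr.1
          exact (continuousAt_const.mul (Real.continuousAt_rpow_const r (1 - a)
            (Or.inl hrpos.ne'))).continuousWithinAt
        · rw [interior_Icc]
          exact fun r hr => ((hGd r hr).differentiableAt).differentiableWithinAt
        · rw [interior_Icc]
          intro r hr
          rw [(hGd r hr).deriv]
          have := hwd_lb r ⟨hδ.1.trans hr.1, hr.2.le⟩
          linarith
      have hle := hGmono' (left_mem_Icc.mpr hδ.2.le) (right_mem_Icc.mpr hδ.2.le) hδ.2.le
      rw [hGdef] at hle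
      simp only at hle
      have e : β / (1 - a) = -(β / (a - 1)) := by
        field_simp
        ring
      rw [e] at hle
      linarith
    -- blow-up
    have hT : Tendsto (fun δ : ℝ => β / (a - 1) * δ ^ (1 - a)) (𝓝[>] (0:ℝ)) atTop := by
      have h1 : Tendsto (fun x : ℝ => x⁻¹ ^ (a - 1)) (𝓝[>] (0:ℝ)) atTop :=
        (tendsto_rpow_atTop (by linarith : (0:ℝ) < a - 1)).comp tendsto_inv_nhdsGT_zero
      have h2 : Tendsto (fun x : ℝ => x ^ (1 - a)) (𝓝[>] (0:ℝ)) atTop := by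
        apply h1.congr'
        filter_upwards [self_mem_nhdsWithin] with x hx
        rw [Real.inv_rpow (le_of_lt hx), ← Real.rpow_neg (le_of_lt hx), neg_sub]
      exact (tendsto_const_mul_atTop_of_pos (div_pos hβ (by linarith))).mpr h2
    have hev1 := hT.eventually_gt_atTop (w t + β / (a - 1) * t ^ (1 - a))
    have hev2 : Ioo (0:ℝ) t ∈ 𝓝[>] (0:ℝ) := Ioo_mem_nhdsGT ht.1
    obtain ⟨δ, hδbig, hδmem⟩ := (hev1.and (eventually_of_mem hev2 (fun x hx => hx))).exists
    have hwδ : 0 ≤ w δ := hwnn δ ⟨hδmem.1.le, (hδmem.2.le.trans ht.2).trans h2ρ⟩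
    have := hGmono δ hδmem
    linarith
  -- Claim B : quadratic bound on [r₁, r₂]
  have hB : ∀ x ∈ Icc r₁ r₂, w x ≤ K * r₂ * (r₂ - r₁) := by
    intro x hx
    set H : ℝ → ℝ := fun r => K / 2 * r ^ 2 - w r with hHdef
    have hHd : ∀ r ∈ Ioo r₁ r₂, HasDerivAt H (K * r - deriv w r) r := by
      intro r hr
      have hrpos : 0 < r := lt_of_le_of_lt hr₁ hr.1
      have hrρ : r ∈ Ioc (0:ℝ) ρ := ⟨hrpos, hr.2.le.trans h2ρ⟩
      have h1 : HasDerivAt (fun y : ℝ => K / 2 * y ^ 2) (K * r) r := by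
        have := (hasDerivAt_pow 2 r).const_mul (K / 2)
        convert this using 1
        · rfl
        · rfl
        simp; ring
      exact h1.sub (hwd r hrρ).hasDerivAt
    have hHmono : MonotoneOn H (Icc r₁ r₂) := by
      apply monotoneOn_of_deriv_nonneg (convex_Icc r₁ r₂)
      · exact ((continuous_const.mul (continuous_pow 2)).continuousOn).sub
          (hwcont.mono (Icc_subset_Icc hr₁ h2ρ))
      · rw [interior_Icc]
        exact fun r hr => ((hHd r hr).differentiableAt).differentiableWithinAt
      · rw [interior_Icc]
        intro r hr
        rw [(hHd r hr).deriv]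
        have hrpos : 0 < r := lt_of_le_of_lt hr₁ hr.1
        have hP : 0 < r ^ a := Real.rpow_pos_of_pos hrpos a
        have hg : g r ≤ 0 := hgle r ⟨hrpos, hr.2.le⟩
        rw [hgdef] at hg; simp only at hg
        have e : K * r ^ (a + 1) = r ^ a * (K * r) := by
          rw [Real.rpow_add_one hrpos.ne']; ring
        have h1 : r ^ a * deriv w r ≤ r ^ a * (K * r) := by linarith
        have h2 : deriv w r ≤ K * r := le_of_mul_le_mul_left h1 hP
        linarith
    have hle := hHmono (left_mem_Icc.mpr (hx.1.trans hx.2)) hx hx.1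
    rw [hHdef] at hle; simp only at hle
    rw [hzero r₁ ⟨hr₁, le_refl r₁⟩] at hle
    have e1 : (x - r₁) * (x + r₁) ≤ (r₂ - r₁) * (2 * r₂) := by
      apply mul_le_mul (by linarith [hx.2]) (by linarith [hx.2, h12.le]) (by linarith [hx.1, hr₁])
        (by linarith [h12])
    nlinarith [hK0]
  -- conclude W = 0
  have hWle : W ≤ 0 := by
    by_cases hm1 : m ≤ r₁
    · rw [hWdef, hzero m ⟨hm.1, hm1⟩]
    · have hmm : m ∈ Icc r₁ r₂ := ⟨(not_le.mp hm1).le, hm.2⟩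
      have h := hB m hmm
      rw [← hWdef] at h
      by_contra hWpos'
      push_neg at hWpos'
      have hane1 : a + 1 ≠ 0 := ha1.ne'
      have h3 : K * r₂ * (r₂ - r₁) * (a + 1) = M * W * r₂ * (r₂ - r₁) := by
        rw [hKdef]; field_simp
      have h4 : W * (a + 1) ≤ M * W * r₂ * (r₂ - r₁) := by
        have := mul_le_mul_of_nonneg_right h ha1.le
        linarith
      have h5 := mul_lt_mul_of_pos_right hsmall hWpos'
      nlinarith
  intro s hs
  have h1 : w s ≤ 0 := le_trans (hmax hs) hWle
  have h2 : 0 ≤ w s := hwnn s (hsub hs)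
  linarith

/-- singular Hopf lemma. -/
theorem stmt19 (a : ℝ) (ha : 1 < a) (R : ℝ≥0∞) (hR : 0 < R) (c w : ℝ → ℝ)
    (hc : ContinuousOn c {r : ℝ | 0 ≤ r ∧ ENNReal.ofReal r < R})
    (hw : ContinuousOn w {r : ℝ | 0 ≤ r ∧ ENNReal.ofReal r < R})
    (hwC2 : ∀ r : ℝ, 0 < r → ENNReal.ofReal r < R → ContDiffAt ℝ 2 w r)
    (hwnn : ∀ r : ℝ, 0 ≤ r → ENNReal.ofReal r < R → 0 ≤ w r)
    (hineq : ∀ r : ℝ, 0 < r → ENNReal.ofReal r < R →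
      deriv (deriv w) r + (a / r) * deriv w r + c r * w r ≤ 0)
    (hw0 : w 0 = 0) :
    ∀ r : ℝ, 0 ≤ r → ENNReal.ofReal r < R → w r = 0 := by
  intro ρ hρ0 hρR
  rcases eq_or_lt_of_le hρ0 with h0 | hρpos
  · rw [← h0]; exact hw0
  have hsub : Icc (0:ℝ) ρ ⊆ {r : ℝ | 0 ≤ r ∧ ENNReal.ofReal r < R} :=
    fun s hs => ⟨hs.1, lt_of_le_of_lt (ENNReal.ofReal_le_ofReal hs.2) hρR⟩
  have hmemR : ∀ s ∈ Ioc (0:ℝ) ρ, ENNReal.ofReal s < R :=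
    fun s hs => lt_of_le_of_lt (ENNReal.ofReal_le_ofReal hs.2) hρR
  have hwcont : ContinuousOn w (Icc (0:ℝ) ρ) := hw.mono hsub
  have hccont : ContinuousOn c (Icc (0:ℝ) ρ) := hc.mono hsub
  have hwd : ∀ s ∈ Ioc (0:ℝ) ρ, DifferentiableAt ℝ w s := fun s hs =>
    (hwC2 s hs.1 (hmemR s hs)).differentiableAt two_ne_zero
  have hwd2 : ∀ s ∈ Ioc (0:ℝ) ρ, DifferentiableAt ℝ (deriv w) s := by
    intro s hs
    have hC := hwC2 s hs.1 (hmemR s hs)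
    obtain ⟨u, hu, huC⟩ := hC.contDiffOn (le_refl 2) (by simp)
    have hsmem : s ∈ interior u := mem_interior_iff_mem_nhds.mpr hu
    have hder : ContDiffOn ℝ 1 (deriv w) (interior u) :=
      (huC.mono interior_subset).deriv_of_isOpen isOpen_interior (by norm_num)
    exact ((hder s hsmem).differentiableWithinAt one_ne_zero).differentiableAt
      (isOpen_interior.mem_nhds hsmem)
  have hwnn' : ∀ s ∈ Icc (0:ℝ) ρ, 0 ≤ w s := fun s hs => hwnn s hs.1 (hsub hs).2
  have hineq' : ∀ s ∈ Ioc (0:ℝ) ρ,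
      deriv (deriv w) s + (a / s) * deriv w s + c s * w s ≤ 0 :=
    fun s hs => hineq s hs.1 (hmemR s hs)
  obtain ⟨C, hC⟩ := isCompact_Icc.exists_bound_of_continuousOn hccont
  set M := max C 0 with hMdef
  have hM0 : 0 ≤ M := le_max_right C 0
  have hMc : ∀ s ∈ Icc (0:ℝ) ρ, -c s ≤ M := by
    intro s hs
    have := hC s hs
    rw [Real.norm_eq_abs] at this
    calc -c s ≤ |c s| := neg_le_abs (c s)
      _ ≤ C := this
      _ ≤ M := le_max_left C 0
  set h : ℝ := (a + 1) / (2 * (M * ρ + 1)) with hhdef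
  have hD : (0:ℝ) < 2 * (M * ρ + 1) := by nlinarith [mul_nonneg hM0 hρpos.le]
  have hh : 0 < h := div_pos (by linarith) hD
  have hhd : h * (2 * (M * ρ + 1)) = a + 1 := by
    rw [hhdef]; field_simp
  set T := {x : ℝ | x ∈ Icc (0:ℝ) ρ ∧ ∀ s ∈ Icc (0:ℝ) x, w s = 0} with hTdef
  have hT0 : (0:ℝ) ∈ T := by
    refine ⟨⟨le_refl 0, hρpos.le⟩, fun s hs => ?_⟩
    rw [le_antisymm hs.2 hs.1]; exact hw0
  have hTbdd : BddAbove T := ⟨ρ, fun x hx => hx.1.2⟩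
  set r₁ := sSup T with hr₁def
  have h0r₁ : 0 ≤ r₁ := le_csSup hTbdd hT0
  have hr₁ρ : r₁ ≤ ρ := csSup_le ⟨0, hT0⟩ (fun x hx => hx.1.2)
  have hIco : ∀ s ∈ Ico (0:ℝ) r₁, w s = 0 := by
    intro s hs
    obtain ⟨x, hxT, hsx⟩ := exists_lt_of_lt_csSup ⟨0, hT0⟩ hs.2
    exact hxT.2 s ⟨hs.1, hsx.le⟩
  have hr₁zero : ∀ s ∈ Icc (0:ℝ) r₁, w s = 0 := by
    intro s hs
    rcases lt_or_eq_of_le hs.2 with hlt | heq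
    · exact hIco s ⟨hs.1, hlt⟩
    · rcases eq_or_lt_of_le h0r₁ with h0 | hr₁pos
      · rw [heq, ← h0]; exact hw0
      have hcw : ContinuousWithinAt w (Ico (0:ℝ) r₁) r₁ :=
        (hwcont r₁ ⟨h0r₁, hr₁ρ⟩).mono (fun x hx => ⟨hx.1, hx.2.le.trans hr₁ρ⟩)
      have hne : (𝓝[Ico (0:ℝ) r₁] r₁).NeBot := by
        rw [← mem_closure_iff_nhdsWithin_neBot, closure_Ico (ne_of_lt hr₁pos)]
        exact right_mem_Icc.mpr h0r₁
      have h1 : Tendsto w (𝓝[Ico (0:ℝ) r₁] r₁) (𝓝 (w r₁)) := hcw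
      have h2 : Tendsto w (𝓝[Ico (0:ℝ) r₁] r₁) (𝓝 0) := by
        apply Tendsto.congr' _ tendsto_const_nhds
        filter_upwards [self_mem_nhdsWithin] with x hx
        exact (hIco x hx).symm
      rw [heq]
      exact tendsto_nhds_unique h1 h2
  by_cases hcase : r₁ < ρ
  · exfalso
    set r₂ := min ρ (r₁ + h) with hr₂def
    have h12 : r₁ < r₂ := lt_min hcase (by linarith)
    have h2ρ : r₂ ≤ ρ := min_le_left _ _
    have e1 : r₂ - r₁ ≤ h := by
      have := min_le_right ρ (r₁ + h); linarith
    have e3 : 0 ≤ r₂ := h0r₁.trans h12.le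
    have hsmall : M * r₂ * (r₂ - r₁) < a + 1 := by
      calc M * r₂ * (r₂ - r₁) ≤ M * ρ * (r₂ - r₁) :=
            mul_le_mul_of_nonneg_right (mul_le_mul_of_nonneg_left h2ρ hM0) (by linarith)
        _ ≤ M * ρ * h := mul_le_mul_of_nonneg_left e1 (mul_nonneg hM0 hρpos.le)
        _ < a + 1 := by nlinarith [mul_nonneg (mul_nonneg hM0 hρpos.le) hh.le]
    have hz2 := stmt19_step a ha c w ρ r₁ r₂ M hρpos h0r₁ h12 h2ρ hM0 hMc hwcont
      hwd hwd2 hwnn' hineq' hr₁zero hsmall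
    have hr₂T : r₂ ∈ T := ⟨⟨e3, h2ρ⟩, hz2⟩
    have := le_csSup hTbdd hr₂T
    rw [← hr₁def] at this
    linarith
  · have hr₁eq : r₁ = ρ := le_antisymm hr₁ρ (not_lt.mp hcase)
    exact hr₁zero ρ ⟨hρ0, hr₁eq.ge⟩
end
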